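/- arXiv:1406.0636 — 3 statements merged into one kernel-verified Lean document; each statement's English description precedes it below -/
import Mathlib

section
/- Under hypotheses (S) and (B), for every K > 0 and all integers a, α ≥ 0 there exists C > 0 such that for all x' ∈ U', all ξ' ∈ ℝ^{n−1} and all (t, τ) ∈ ℝ²: |∂_t^a ∂_τ^α *Φ(t, τ)| ≤ C ⟨t⟩^{1−a} ⟨τ⟩^{1−α}. (Property (P1) of a regular SG phase function, with constants independent of (x', ξ') ∈ U' × ℝ^{n−1}; this is part of Theorem 1.2.) -/
noncomputable section

open Real MeasureTheory

/-- Japanese bracket of a real number: `⟨t⟩ = √(1+t²)`. -/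
def jb (t : ℝ) : ℝ := Real.sqrt (1 + t ^ 2)

/-- Japanese bracket of a vector in `ℝᵏ` (Euclidean norm). -/
def jbV {k : ℕ} (v : Fin k → ℝ) : ℝ := Real.sqrt (1 + ∑ i, v i ^ 2)

/-- Japanese bracket of the full covariable `(ξ', ξₙ) ∈ ℝᵏ⁺¹`. -/
def jbP {k : ℕ} (v : Fin k → ℝ) (t : ℝ) : ℝ := Real.sqrt (1 + (∑ i, v i ^ 2) + t ^ 2)

/-- Euclidean norm of a vector in `ℝᵏ`. -/
def enormV {k : ℕ} (v : Fin k → ℝ) : ℝ := Real.sqrt (∑ i, v i ^ 2)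

/-- Euclidean norm of the full covariable `(ξ', ξₙ)`. -/
def enormP {k : ℕ} (v : Fin k → ℝ) (t : ℝ) : ℝ := Real.sqrt ((∑ i, v i ^ 2) + t ^ 2)

/-- Functions of `(x', xₙ, ξ', ξₙ)` with values in `E`. -/
abbrev Fn (k : ℕ) (E : Type*) := (Fin k → ℝ) → ℝ → (Fin k → ℝ) → ℝ → E

/-- The uncurried version of `f : Fn k E`. -/
def Fn.unc {k : ℕ} {E : Type*} (f : Fn k E) :
    ((Fin k → ℝ) × ℝ × (Fin k → ℝ) × ℝ) → E :=
  fun p => f p.1 p.2.1 p.2.2.1 p.2.2.2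

section Derivs

variable {k : ℕ} {E : Type*} [NormedAddCommGroup E] [NormedSpace ℝ E]

/-- Partial derivative in `xₙ`. -/
def Dxn (f : Fn k E) : Fn k E := fun x' xn ξ' ξn => deriv (fun t => f x' t ξ' ξn) xn

/-- Partial derivative in `ξₙ`. -/
def Dxin (f : Fn k E) : Fn k E := fun x' xn ξ' ξn => deriv (fun t => f x' xn ξ' t) ξn

/-- Partial derivative in the `i`-th coordinate of `x'`. -/
def Dxp (i : Fin k) (f : Fn k E) : Fn k E :=
  fun x' xn ξ' ξn => deriv (fun t => f (Function.update x' i t) xn ξ' ξn) (x' i)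

/-- Partial derivative in the `i`-th coordinate of `ξ'`. -/
def Dxip (i : Fin k) (f : Fn k E) : Fn k E :=
  fun x' xn ξ' ξn => deriv (fun t => f x' xn (Function.update ξ' i t) ξn) (ξ' i)

/-- Multi-index partial derivative `∂ₓ'^β`. -/
def DxpM (β : Fin k → ℕ) (f : Fn k E) : Fn k E :=
  (List.finRange k).foldr (fun i g => (Dxp i)^[β i] g) f

/-- Multi-index partial derivative `∂_ξ'^α`. -/
def DxipM (α : Fin k → ℕ) (f : Fn k E) : Fn k E :=
  (List.finRange k).foldr (fun i g => (Dxip i)^[α i] g) f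

/-- Partial derivative in the first of two real variables. -/
def D1 (F : ℝ → ℝ → E) : ℝ → ℝ → E := fun s t => deriv (fun u => F u t) s

/-- Partial derivative in the second of two real variables. -/
def D2 (F : ℝ → ℝ → E) : ℝ → ℝ → E := fun s t => deriv (fun u => F s u) t

end Derivs

/-- The cut-off function `ω`: smooth, even, non-increasing on `[0,∞)`,
`≡ 1` on `[-1/2,1/2]`, `≡ 0` outside `(-1,1)`. -/
def CutOff (ω : ℝ → ℝ) : Prop :=
  ContDiff ℝ (⊤ : ℕ∞) ω ∧ (∀ t, ω (-t) = ω t) ∧ AntitoneOn ω (Set.Ici 0) ∧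
    (∀ t : ℝ, |t| ≤ 1 / 2 → ω t = 1) ∧ (∀ t : ℝ, 1 ≤ |t| → ω t = 0)

/-- `φ := ψ − ψ_∂`, where `ψ_∂(x',ξ') = ψ(x',0,ξ',0)`. -/
def phiOf {k : ℕ} (ψ : Fn k ℝ) : Fn k ℝ :=
  fun x' xn ξ' ξn => ψ x' xn ξ' ξn - ψ x' 0 ξ' 0

/-- Hypothesis (S): symbol estimates of order `1` for `ψ`, for `x' ∈ Ω'`, `|xₙ| ≤ 2`. -/
def HypS {k : ℕ} (Ω' : Set (Fin k → ℝ)) (ψ : Fn k ℝ) : Prop :=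
  ∀ (a b : ℕ) (α β : Fin k → ℕ), ∃ C > 0, ∀ x' ∈ Ω', ∀ xn : ℝ, |xn| ≤ 2 →
    ∀ (ξ' : Fin k → ℝ) (ξn : ℝ),
      |DxpM β ((Dxn)^[b] (DxipM α ((Dxin)^[a] ψ))) x' xn ξ' ξn| ≤
        C * jbP ξ' ξn ^ ((1 : ℝ) - ((a : ℝ) + ∑ i, (α i : ℝ)))

/-- Hypothesis (B): `∂_{ξₙ}ψ(x',0,ξ',ξₙ) = 0` for `x' ∈ Ω'`. -/
def HypB {k : ℕ} (Ω' : Set (Fin k → ℝ)) (ψ : Fn k ℝ) : Prop :=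
  ∀ x' ∈ Ω', ∀ (ξ' : Fin k → ℝ) (ξn : ℝ), Dxin ψ x' 0 ξ' ξn = 0

/-- The rescaled phase function `*Φ`. -/
def PhiS {k : ℕ} (ω : ℝ → ℝ) (K : ℝ) (ψ : Fn k ℝ) (x' ξ' : Fin k → ℝ) (t τ : ℝ) : ℝ :=
  ω (t / jbV ξ') * phiOf ψ x' (t / jbV ξ') ξ' (τ * jbV ξ')
    + (1 - ω (t / jbV ξ')) * K * t * τ
section Infra

variable {k : ℕ}

lemma hle1 : ((⊤ : ℕ∞) : WithTop ℕ∞) ≠ 0 := by simp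

abbrev Pt (k : ℕ) := (Fin k → ℝ) × ℝ × (Fin k → ℝ) × ℝ

lemma contDiff_slice_xin {f : Fn k ℝ} (hf : ContDiff ℝ (⊤ : ℕ∞) (Fn.unc f))
    (x' : Fin k → ℝ) (xn : ℝ) (ξ' : Fin k → ℝ) :
    ContDiff ℝ (⊤ : ℕ∞) (fun u : ℝ => f x' xn ξ' u) := by
  have h : (fun u : ℝ => f x' xn ξ' u) = Fn.unc f ∘ (fun u : ℝ => (x', xn, ξ', u)) := rfl
  rw [h]
  exact hf.comp (contDiff_const.prodMk (contDiff_const.prodMk (contDiff_const.prodMk contDiff_id)))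

lemma contDiff_slice_xn {f : Fn k ℝ} (hf : ContDiff ℝ (⊤ : ℕ∞) (Fn.unc f))
    (x' : Fin k → ℝ) (ξ' : Fin k → ℝ) (ξn : ℝ) :
    ContDiff ℝ (⊤ : ℕ∞) (fun u : ℝ => f x' u ξ' ξn) := by
  have h : (fun u : ℝ => f x' u ξ' ξn) = Fn.unc f ∘ (fun u : ℝ => (x', u, ξ', ξn)) := rfl
  rw [h]
  exact hf.comp (contDiff_const.prodMk (contDiff_id.prodMk (contDiff_const.prodMk contDiff_const)))

lemma hasDerivAt_xin {f : Fn k ℝ} (hf : ContDiff ℝ (⊤ : ℕ∞) (Fn.unc f))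
    (x' : Fin k → ℝ) (xn : ℝ) (ξ' : Fin k → ℝ) (ξn : ℝ) :
    HasDerivAt (fun u : ℝ => f x' xn ξ' u) (Dxin f x' xn ξ' ξn) ξn :=
  hasDerivAt_deriv_iff.mpr (((contDiff_slice_xin hf x' xn ξ').differentiable hle1) ξn)

lemma hasDerivAt_xn {f : Fn k ℝ} (hf : ContDiff ℝ (⊤ : ℕ∞) (Fn.unc f))
    (x' : Fin k → ℝ) (xn : ℝ) (ξ' : Fin k → ℝ) (ξn : ℝ) :
    HasDerivAt (fun u : ℝ => f x' u ξ' ξn) (Dxn f x' xn ξ' ξn) xn :=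
  hasDerivAt_deriv_iff.mpr (((contDiff_slice_xn hf x' ξ' ξn).differentiable hle1) xn)

lemma contDiff_unc_Dxin {f : Fn k ℝ} (hf : ContDiff ℝ (⊤ : ℕ∞) (Fn.unc f)) :
    ContDiff ℝ (⊤ : ℕ∞) (Fn.unc (Dxin f)) := by
  have h1 : ∀ p : Pt k, Fn.unc (Dxin f) p
      = fderiv ℝ (Fn.unc f) p ((0 : Fin k → ℝ), (0 : ℝ), (0 : Fin k → ℝ), (1 : ℝ)) := by
    intro p
    have hι : HasDerivAt (fun u : ℝ => ((p.1, p.2.1, p.2.2.1, u) : Pt k))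
        (((0 : Fin k → ℝ), (0 : ℝ), (0 : Fin k → ℝ), (1 : ℝ)) : Pt k) p.2.2.2 :=
      (hasDerivAt_const _ _).prodMk ((hasDerivAt_const _ _).prodMk
        ((hasDerivAt_const _ _).prodMk (hasDerivAt_id _)))
    have h2 : HasDerivAt (fun u : ℝ => f p.1 p.2.1 p.2.2.1 u)
        (fderiv ℝ (Fn.unc f) p ((0 : Fin k → ℝ), (0 : ℝ), (0 : Fin k → ℝ), (1 : ℝ))) p.2.2.2 :=
      by have := (((hf.differentiable hle1) p).hasFDerivAt).comp_hasDerivAt p.2.2.2 hι; exact this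
    exact h2.deriv
  have h4 : ContDiff ℝ (⊤ : ℕ∞)
      (fun p : Pt k => fderiv ℝ (Fn.unc f) p ((0 : Fin k → ℝ), (0 : ℝ), (0 : Fin k → ℝ), (1 : ℝ))) :=
    (contDiff_infty_iff_fderiv.mp hf).2.clm_apply contDiff_const
  exact (funext h1 : Fn.unc (Dxin f) = _) ▸ h4

lemma contDiff_unc_Dxn {f : Fn k ℝ} (hf : ContDiff ℝ (⊤ : ℕ∞) (Fn.unc f)) :
    ContDiff ℝ (⊤ : ℕ∞) (Fn.unc (Dxn f)) := by
  have h1 : ∀ p : Pt k, Fn.unc (Dxn f) p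
      = fderiv ℝ (Fn.unc f) p ((0 : Fin k → ℝ), (1 : ℝ), (0 : Fin k → ℝ), (0 : ℝ)) := by
    intro p
    have hι : HasDerivAt (fun u : ℝ => ((p.1, u, p.2.2.1, p.2.2.2) : Pt k))
        (((0 : Fin k → ℝ), (1 : ℝ), (0 : Fin k → ℝ), (0 : ℝ)) : Pt k) p.2.1 :=
      (hasDerivAt_const _ _).prodMk ((hasDerivAt_id _).prodMk
        ((hasDerivAt_const _ _).prodMk (hasDerivAt_const _ _)))
    have h2 : HasDerivAt (fun u : ℝ => f p.1 u p.2.2.1 p.2.2.2)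
        (fderiv ℝ (Fn.unc f) p ((0 : Fin k → ℝ), (1 : ℝ), (0 : Fin k → ℝ), (0 : ℝ))) p.2.1 :=
      by have := (((hf.differentiable hle1) p).hasFDerivAt).comp_hasDerivAt p.2.1 hι; exact this
    exact h2.deriv
  have h4 : ContDiff ℝ (⊤ : ℕ∞)
      (fun p : Pt k => fderiv ℝ (Fn.unc f) p ((0 : Fin k → ℝ), (1 : ℝ), (0 : Fin k → ℝ), (0 : ℝ))) :=
    (contDiff_infty_iff_fderiv.mp hf).2.clm_apply contDiff_const
  exact (funext h1 : Fn.unc (Dxn f) = _) ▸ h4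

lemma contDiff_unc_Dxin_iter {f : Fn k ℝ} (hf : ContDiff ℝ (⊤ : ℕ∞) (Fn.unc f)) (m : ℕ) :
    ContDiff ℝ (⊤ : ℕ∞) (Fn.unc ((Dxin)^[m] f)) := by
  induction m generalizing f with
  | zero => exact hf
  | succ m ih =>
    rw [Function.iterate_succ_apply]
    exact ih (contDiff_unc_Dxin hf)

lemma contDiff_unc_Dxn_iter {f : Fn k ℝ} (hf : ContDiff ℝ (⊤ : ℕ∞) (Fn.unc f)) (m : ℕ) :
    ContDiff ℝ (⊤ : ℕ∞) (Fn.unc ((Dxn)^[m] f)) := by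
  induction m generalizing f with
  | zero => exact hf
  | succ m ih =>
    rw [Function.iterate_succ_apply]
    exact ih (contDiff_unc_Dxn hf)

lemma dxin_iter_eq (f : Fn k ℝ) (m : ℕ) (x' : Fin k → ℝ) (xn : ℝ) (ξ' : Fin k → ℝ) (ξn : ℝ) :
    (Dxin)^[m] f x' xn ξ' ξn = (deriv)^[m] (fun u : ℝ => f x' xn ξ' u) ξn := by
  induction m generalizing f with
  | zero => rfl
  | succ m ih =>
    rw [Function.iterate_succ_apply, ih (Dxin f)]
    have h : (fun u : ℝ => Dxin f x' xn ξ' u) = deriv (fun u : ℝ => f x' xn ξ' u) := rfl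
    rw [h, ← Function.iterate_succ_apply]

lemma dxn_iter_eq (f : Fn k ℝ) (m : ℕ) (x' : Fin k → ℝ) (xn : ℝ) (ξ' : Fin k → ℝ) (ξn : ℝ) :
    (Dxn)^[m] f x' xn ξ' ξn = (deriv)^[m] (fun u : ℝ => f x' u ξ' ξn) xn := by
  induction m generalizing f with
  | zero => rfl
  | succ m ih =>
    rw [Function.iterate_succ_apply, ih (Dxn f)]
    have h : (fun u : ℝ => Dxn f x' u ξ' ξn) = deriv (fun u : ℝ => f x' u ξ' ξn) := rfl
    rw [h, ← Function.iterate_succ_apply]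

lemma d1_iter_eq (F : ℝ → ℝ → ℝ) (a : ℕ) (t τ : ℝ) :
    (D1)^[a] F t τ = (deriv)^[a] (fun u : ℝ => F u τ) t := by
  induction a generalizing F with
  | zero => rfl
  | succ a ih =>
    rw [Function.iterate_succ_apply, ih (D1 F)]
    have h : (fun u : ℝ => D1 F u τ) = deriv (fun u : ℝ => F u τ) := rfl
    rw [h, ← Function.iterate_succ_apply]

lemma d2_iter_eq (F : ℝ → ℝ → ℝ) (a : ℕ) (t τ : ℝ) :
    (D2)^[a] F t τ = (deriv)^[a] (fun u : ℝ => F t u) τ := by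
  induction a generalizing F with
  | zero => rfl
  | succ a ih =>
    rw [Function.iterate_succ_apply, ih (D2 F)]
    have h : (fun u : ℝ => D2 F t u) = deriv (fun u : ℝ => F t u) := rfl
    rw [h, ← Function.iterate_succ_apply]

end Infra
section OneDim

lemma hlen (n : ℕ) : (n : WithTop ℕ∞) ≤ ((⊤ : ℕ∞) : WithTop ℕ∞) := by
  exact_mod_cast le_top

/-- `lin a` is `t ↦ t`, `t ↦ 1`, `t ↦ 0` for `a = 0, 1, ≥ 2`. -/
def lin : ℕ → ℝ → ℝ
  | 0 => fun t => t
  | 1 => fun _ => 1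
  | _ + 2 => fun _ => 0

lemma hasDerivAt_lin (a : ℕ) (τ : ℝ) : HasDerivAt (lin a) (lin (a + 1) τ) τ := by
  match a with
  | 0 => exact hasDerivAt_id τ
  | 1 => exact hasDerivAt_const τ 1
  | (n + 2) => exact hasDerivAt_const τ 0

lemma jb_pos (t : ℝ) : 0 < jb t := Real.sqrt_pos.mpr (by positivity)

lemma one_le_jb (t : ℝ) : 1 ≤ jb t := by
  rw [show (1 : ℝ) = Real.sqrt 1 by simp [Real.sqrt_one]]
  exact Real.sqrt_le_sqrt (by nlinarith)

lemma abs_le_jb (t : ℝ) : |t| ≤ jb t := by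
  rw [show |t| = Real.sqrt (t ^ 2) by rw [Real.sqrt_sq_eq_abs]]
  exact Real.sqrt_le_sqrt (by nlinarith)

lemma abs_lin_le (a : ℕ) (t : ℝ) : |lin a t| ≤ jb t ^ ((1 : ℝ) - a) := by
  match a with
  | 0 =>
    have h0 : ((1 : ℝ) - ((0 : ℕ) : ℝ)) = 1 := by norm_num
    rw [h0, Real.rpow_one]
    exact abs_le_jb t
  | 1 => simp [lin, Real.rpow_natCast]
  | (n + 2) =>
    have : lin (n + 2) t = 0 := rfl
    rw [this]
    simpa using (Real.rpow_pos_of_pos (jb_pos t) _).le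

lemma abs_lin_le_one {a : ℕ} {s : ℝ} (hs : |s| ≤ 1) : |lin a s| ≤ 1 := by
  match a with
  | 0 => exact hs
  | 1 => simp [lin]
  | (n + 2) => simp [lin]

lemma iter_deriv_congr {S : Set ℝ} (hS : IsOpen S) {f g : ℝ → ℝ} (h : Set.EqOn f g S) (n : ℕ) :
    Set.EqOn (deriv^[n] f) (deriv^[n] g) S := by
  induction n with
  | zero => exact h
  | succ n ih =>
    intro x hx
    rw [Function.iterate_succ_apply', Function.iterate_succ_apply']
    exact (ih.eventuallyEq_of_mem (hS.mem_nhds hx)).deriv_eq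

lemma iter_deriv_const (C : ℝ) (m : ℕ) (t : ℝ) :
    deriv^[m] (fun _ : ℝ => C) t = if m = 0 then C else 0 := by
  induction m generalizing C with
  | zero => simp
  | succ m ih =>
    rw [Function.iterate_succ_apply]
    have h : deriv (fun _ : ℝ => C) = fun _ : ℝ => (0 : ℝ) := by
      funext u; exact deriv_const u C
    rw [h, ih 0]
    simp

lemma iter_deriv_linear (C : ℝ) (a : ℕ) (t : ℝ) :
    deriv^[a] (fun u : ℝ => C * u) t = C * lin a t := by
  match a with
  | 0 => rfl
  | (m + 1) =>
    rw [Function.iterate_succ_apply]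
    have h : deriv (fun u : ℝ => C * u) = fun _ : ℝ => C := by
      funext u; exact ((hasDerivAt_id u).const_mul C).deriv.trans (mul_one C)
    rw [h, iter_deriv_const]
    match m with
    | 0 => simp [lin]
    | (n + 1) => simp [lin]

lemma iter_deriv_add {f g : ℝ → ℝ} (hf : ContDiff ℝ (⊤ : ℕ∞) f) (hg : ContDiff ℝ (⊤ : ℕ∞) g)
    (n : ℕ) (t : ℝ) :
    deriv^[n] (fun u => f u + g u) t = deriv^[n] f t + deriv^[n] g t := by
  induction n generalizing f g with
  | zero => rfl
  | succ n ih =>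
    rw [Function.iterate_succ_apply, Function.iterate_succ_apply, Function.iterate_succ_apply]
    have h : deriv (fun u => f u + g u) = fun u => deriv f u + deriv g u := by
      funext u
      exact deriv_fun_add (hf.differentiable hle1 u) (hg.differentiable hle1 u)
    rw [h]
    exact ih (contDiff_infty_iff_deriv.mp hf).2 (contDiff_infty_iff_deriv.mp hg).2

lemma iter_deriv_sub {f g : ℝ → ℝ} (hf : ContDiff ℝ (⊤ : ℕ∞) f) (hg : ContDiff ℝ (⊤ : ℕ∞) g)
    (n : ℕ) (t : ℝ) :
    deriv^[n] (fun u => f u - g u) t = deriv^[n] f t - deriv^[n] g t := by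
  induction n generalizing f g with
  | zero => rfl
  | succ n ih =>
    rw [Function.iterate_succ_apply, Function.iterate_succ_apply, Function.iterate_succ_apply]
    have h : deriv (fun u => f u - g u) = fun u => deriv f u - deriv g u := by
      funext u
      exact deriv_fun_sub (hf.differentiable hle1 u) (hg.differentiable hle1 u)
    rw [h]
    exact ih (contDiff_infty_iff_deriv.mp hf).2 (contDiff_infty_iff_deriv.mp hg).2

lemma iter_deriv_const_mul {f : ℝ → ℝ} (hf : ContDiff ℝ (⊤ : ℕ∞) f) (c : ℝ) (n : ℕ) (t : ℝ) :
    deriv^[n] (fun u => c * f u) t = c * deriv^[n] f t := by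
  induction n generalizing f with
  | zero => rfl
  | succ n ih =>
    rw [Function.iterate_succ_apply, Function.iterate_succ_apply]
    have h : deriv (fun u => c * f u) = fun u => c * deriv f u := by
      funext u
      exact deriv_const_mul c (hf.differentiable hle1 u)
    rw [h]
    exact ih (contDiff_infty_iff_deriv.mp hf).2

lemma iter_deriv_mul_const {f : ℝ → ℝ} (hf : ContDiff ℝ (⊤ : ℕ∞) f) (c : ℝ) (n : ℕ) (t : ℝ) :
    deriv^[n] (fun u => f u * c) t = deriv^[n] f t * c := by
  simp only [mul_comm _ c]
  exact iter_deriv_const_mul hf c n t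

lemma iter_deriv_comp_mul {P : ℝ → ℝ} (hP : ContDiff ℝ (⊤ : ℕ∞) P) (c : ℝ) (n : ℕ) (t : ℝ) :
    deriv^[n] (fun u : ℝ => P (u * c)) t = c ^ n * deriv^[n] P (t * c) := by
  induction n generalizing P with
  | zero => simp
  | succ n ih =>
    rw [Function.iterate_succ_apply]
    have h : deriv (fun u : ℝ => P (u * c)) = fun u : ℝ => deriv P (u * c) * c := by
      funext u
      exact ((hasDerivAt_deriv_iff.mpr (hP.differentiable hle1 (u * c))).comp u
        (hasDerivAt_mul_const c)).deriv
    rw [h]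
    have hP' : ContDiff ℝ (⊤ : ℕ∞) (deriv P) := (contDiff_infty_iff_deriv.mp hP).2
    have h2 : deriv^[n] (fun u : ℝ => deriv P (u * c) * c) t
        = deriv^[n] (fun u : ℝ => deriv P (u * c)) t * c := by
      have hQ : ContDiff ℝ (⊤ : ℕ∞) (fun u : ℝ => deriv P (u * c)) :=
        hP'.comp (contDiff_id.mul contDiff_const)
      exact iter_deriv_mul_const hQ c n t
    rw [h2, ih hP', Function.iterate_succ_apply]
    ring

lemma abs_iter_deriv_mul_le {f g : ℝ → ℝ} (hf : ContDiff ℝ (⊤ : ℕ∞) f)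
    (hg : ContDiff ℝ (⊤ : ℕ∞) g) (n : ℕ) (x : ℝ) :
    |deriv^[n] (fun t => f t * g t) x| ≤ ∑ i ∈ Finset.range (n + 1),
      (n.choose i : ℝ) * |deriv^[i] f x| * |deriv^[n - i] g x| := by
  have h := norm_iteratedFDeriv_mul_le hf hg x (hlen n)
  simp only [norm_iteratedFDeriv_eq_norm_iteratedDeriv, iteratedDeriv_eq_iterate,
    Real.norm_eq_abs] at h
  exact h

lemma exists_bound_iter_deriv {w : ℝ → ℝ} (hw : ContDiff ℝ (⊤ : ℕ∞) w) (N : ℕ) :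
    ∃ M : ℝ, 1 ≤ M ∧ ∀ j ≤ N, ∀ s : ℝ, |s| ≤ 1 → |deriv^[j] w s| ≤ M := by
  induction N with
  | zero =>
    obtain ⟨C, hC⟩ := (isCompact_Icc (a := (-1 : ℝ)) (b := 1)).exists_bound_of_continuousOn
      (ContDiff.iterate_deriv 0 hw).continuous.continuousOn
    refine ⟨max C 1, le_max_right _ _, ?_⟩
    intro j hj s hs
    interval_cases j
    exact le_trans (by simpa [Real.norm_eq_abs] using hC s (abs_le.mp hs)) (le_max_left _ _)
  | succ N ih =>
    obtain ⟨M, hM1, hM⟩ := ih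
    obtain ⟨C, hC⟩ := (isCompact_Icc (a := (-1 : ℝ)) (b := 1)).exists_bound_of_continuousOn
      (ContDiff.iterate_deriv (N + 1) hw).continuous.continuousOn
    refine ⟨max M C, le_trans hM1 (le_max_left _ _), ?_⟩
    intro j hj s hs
    rcases Nat.lt_or_ge j (N + 1) with h | h
    · exact le_trans (hM j (Nat.lt_succ_iff.mp h) s hs) (le_max_left _ _)
    · have : j = N + 1 := le_antisymm hj h
      subst this
      exact le_trans (by simpa [Real.norm_eq_abs] using hC s (abs_le.mp hs)) (le_max_right _ _)

end OneDim
section PhiLemmas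

variable {k : ℕ}

lemma foldr_id {β : Type*} (f : β) (l : List (Fin k)) :
    List.foldr (fun _ g => g) f l = f := by
  induction l with
  | nil => rfl
  | cons x l ih => simpa using ih

lemma dxpM_zero (f : Fn k ℝ) : DxpM (fun _ => 0) f = f := by
  unfold DxpM
  simpa using foldr_id f (List.finRange k)

lemma dxipM_zero (f : Fn k ℝ) : DxipM (fun _ => 0) f = f := by
  unfold DxipM
  simpa using foldr_id f (List.finRange k)

lemma contDiff_unc_phi {ψ : Fn k ℝ} (hψ : ContDiff ℝ (⊤ : ℕ∞) (Fn.unc ψ)) :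
    ContDiff ℝ (⊤ : ℕ∞) (Fn.unc (phiOf ψ)) := by
  have h : Fn.unc (phiOf ψ)
      = fun p : Pt k => Fn.unc ψ p - Fn.unc ψ (p.1, 0, p.2.2.1, 0) := rfl
  rw [h]
  exact hψ.sub (hψ.comp (contDiff_fst.prodMk (contDiff_const.prodMk
    ((contDiff_fst.comp (contDiff_snd.comp contDiff_snd)).prodMk contDiff_const))))

lemma dxin_phi (ψ : Fn k ℝ) : Dxin (phiOf ψ) = Dxin ψ := by
  funext x' xn ξ' ξn
  exact deriv_sub_const _

lemma dxn_phi (ψ : Fn k ℝ) : Dxn (phiOf ψ) = Dxn ψ := by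
  funext x' xn ξ' ξn
  exact deriv_sub_const _

lemma dxin_iter_phi (ψ : Fn k ℝ) (m : ℕ) :
    (Dxin)^[m + 1] (phiOf ψ) = (Dxin)^[m + 1] ψ := by
  rw [Function.iterate_succ_apply, Function.iterate_succ_apply, dxin_phi]

lemma dxn_dxin_iter_phi (ψ : Fn k ℝ) (α : ℕ) :
    Dxn ((Dxin)^[α] (phiOf ψ)) = Dxn ((Dxin)^[α] ψ) := by
  match α with
  | 0 => exact dxn_phi ψ
  | (m + 1) => rw [dxin_iter_phi]

variable {Ω' : Set (Fin k → ℝ)} {ψ : Fn k ℝ}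

/-- Combined symbol bound for `∂ₙ^m ∂_{ξₙ}^α ψ`, `m ≤ N`. -/
lemma hS_bound (hS : HypS Ω' ψ) (α N : ℕ) :
    ∃ C : ℝ, 0 < C ∧ ∀ m ≤ N, ∀ x' ∈ Ω', ∀ xn : ℝ, |xn| ≤ 2 → ∀ (ξ' : Fin k → ℝ) (ξn : ℝ),
      |(Dxn)^[m] ((Dxin)^[α] ψ) x' xn ξ' ξn| ≤ C * jbP ξ' ξn ^ ((1 : ℝ) - α) := by
  have base : ∀ m : ℕ, ∃ C : ℝ, 0 < C ∧ ∀ x' ∈ Ω', ∀ xn : ℝ, |xn| ≤ 2 →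
      ∀ (ξ' : Fin k → ℝ) (ξn : ℝ),
      |(Dxn)^[m] ((Dxin)^[α] ψ) x' xn ξ' ξn| ≤ C * jbP ξ' ξn ^ ((1 : ℝ) - α) := by
    intro m
    obtain ⟨C, hC0, hC⟩ := hS α m (fun _ => 0) (fun _ => 0)
    refine ⟨C, hC0, ?_⟩
    intro x' hx' xn hxn ξ' ξn
    have h := hC x' hx' xn hxn ξ' ξn
    rw [dxpM_zero, dxipM_zero] at h
    simpa using h
  induction N with
  | zero =>
    obtain ⟨C, hC0, hC⟩ := base 0
    exact ⟨C, hC0, fun m hm => by interval_cases m; exact hC⟩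
  | succ N ih =>
    obtain ⟨C, hC0, hC⟩ := ih
    obtain ⟨C', hC'0, hC'⟩ := base (N + 1)
    refine ⟨max C C', lt_of_lt_of_le hC0 (le_max_left _ _), ?_⟩
    intro m hm x' hx' xn hxn ξ' ξn
    have hpow : (0 : ℝ) ≤ jbP ξ' ξn ^ ((1 : ℝ) - α) := by
      apply Real.rpow_nonneg
      exact Real.sqrt_nonneg _
    rcases Nat.lt_or_ge m (N + 1) with h | h
    · exact le_trans (hC m (Nat.lt_succ_iff.mp h) x' hx' xn hxn ξ' ξn)
        (mul_le_mul_of_nonneg_right (le_max_left _ _) hpow)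
    · have : m = N + 1 := le_antisymm hm h
      subst this
      exact le_trans (hC' x' hx' xn hxn ξ' ξn)
        (mul_le_mul_of_nonneg_right (le_max_right _ _) hpow)

lemma dxin_iter_psi_zero (hB : HypB Ω' ψ) {x' : Fin k → ℝ} (hx' : x' ∈ Ω')
    (m : ℕ) (ξ' : Fin k → ℝ) (ξn : ℝ) :
    (Dxin)^[m + 1] ψ x' 0 ξ' ξn = 0 := by
  rw [Function.iterate_succ_apply, dxin_iter_eq]
  have h : (fun u : ℝ => Dxin ψ x' 0 ξ' u) = fun _ : ℝ => (0 : ℝ) := by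
    funext u; exact hB x' hx' ξ' u
  rw [h, iter_deriv_const]
  split <;> rfl

lemma phi_zero_xn (hψ : ContDiff ℝ (⊤ : ℕ∞) (Fn.unc ψ)) (hB : HypB Ω' ψ)
    {x' : Fin k → ℝ} (hx' : x' ∈ Ω') (ξ' : Fin k → ℝ) (ξn : ℝ) :
    phiOf ψ x' 0 ξ' ξn = 0 := by
  have hconst : ψ x' 0 ξ' ξn = ψ x' 0 ξ' 0 := by
    apply is_const_of_deriv_eq_zero ((contDiff_slice_xin hψ x' 0 ξ').differentiable hle1)
    intro u
    exact hB x' hx' ξ' u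
  simp [phiOf, hconst]

lemma dxin_iter_phi_zero (hψ : ContDiff ℝ (⊤ : ℕ∞) (Fn.unc ψ)) (hB : HypB Ω' ψ)
    {x' : Fin k → ℝ} (hx' : x' ∈ Ω') (α : ℕ) (ξ' : Fin k → ℝ) (ξn : ℝ) :
    (Dxin)^[α] (phiOf ψ) x' 0 ξ' ξn = 0 := by
  match α with
  | 0 => exact phi_zero_xn hψ hB hx' ξ' ξn
  | (m + 1) => rw [dxin_iter_phi]; exact dxin_iter_psi_zero hB hx' m ξ' ξn

/-- MVT bound: smallness in `xₙ` of `∂_{ξₙ}^α φ`, from (B). -/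
lemma mvt_bound (hψ : ContDiff ℝ (⊤ : ℕ∞) (Fn.unc ψ)) (hS : HypS Ω' ψ) (hB : HypB Ω' ψ)
    (α : ℕ) :
    ∃ C : ℝ, 0 < C ∧ ∀ x' ∈ Ω', ∀ s : ℝ, |s| ≤ 2 → ∀ (ξ' : Fin k → ℝ) (ξn : ℝ),
      |(Dxin)^[α] (phiOf ψ) x' s ξ' ξn| ≤ C * |s| * jbP ξ' ξn ^ ((1 : ℝ) - α) := by
  obtain ⟨C, hC0, hC⟩ := hS_bound hS α 1
  refine ⟨C, hC0, ?_⟩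
  intro x' hx' s hs ξ' ξn
  have hφ : ContDiff ℝ (⊤ : ℕ∞) (Fn.unc ((Dxin)^[α] (phiOf ψ))) :=
    contDiff_unc_Dxin_iter (contDiff_unc_phi hψ) α
  set g : ℝ → ℝ := fun u => (Dxin)^[α] (phiOf ψ) x' u ξ' ξn with hg
  set g' : ℝ → ℝ := fun u => Dxn ((Dxin)^[α] (phiOf ψ)) x' u ξ' ξn with hg'
  have hderiv : ∀ u ∈ Set.Icc (-2 : ℝ) 2, HasDerivWithinAt g (g' u) (Set.Icc (-2 : ℝ) 2) u :=
    fun u _ => (hasDerivAt_xn hφ x' u ξ' ξn).hasDerivWithinAt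
  have hbound : ∀ u ∈ Set.Icc (-2 : ℝ) 2, ‖g' u‖ ≤ C * jbP ξ' ξn ^ ((1 : ℝ) - α) := by
    intro u hu
    have h1 : g' u = (Dxn)^[1] ((Dxin)^[α] ψ) x' u ξ' ξn := by
      rw [hg']
      simp only [Function.iterate_one]
      rw [dxn_dxin_iter_phi]
    rw [Real.norm_eq_abs, h1]
    exact hC 1 le_rfl x' hx' u (abs_le.mpr ⟨hu.1, hu.2⟩) ξ' ξn
  have hmem0 : (0 : ℝ) ∈ Set.Icc (-2 : ℝ) 2 := by norm_num
  have hmems : s ∈ Set.Icc (-2 : ℝ) 2 := abs_le.mp hs |> fun h => ⟨h.1, h.2⟩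
  have := (convex_Icc (-2 : ℝ) 2).norm_image_sub_le_of_norm_hasDerivWithin_le
    hderiv hbound hmem0 hmems
  have hg0 : g 0 = 0 := dxin_iter_phi_zero hψ hB hx' α ξ' ξn
  rw [hg0, sub_zero, sub_zero, Real.norm_eq_abs, Real.norm_eq_abs] at this
  calc |g s| ≤ C * jbP ξ' ξn ^ ((1 : ℝ) - α) * |s| := this
    _ = C * |s| * jbP ξ' ξn ^ ((1 : ℝ) - α) := by ring

end PhiLemmas
section Brackets

variable {k : ℕ}

lemma one_le_jbV (ξ' : Fin k → ℝ) : 1 ≤ jbV ξ' := by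
  rw [show (1 : ℝ) = Real.sqrt 1 by simp]
  apply Real.sqrt_le_sqrt
  have : (0 : ℝ) ≤ ∑ i, ξ' i ^ 2 := Finset.sum_nonneg fun i _ => sq_nonneg _
  linarith

lemma jbV_pos (ξ' : Fin k → ℝ) : 0 < jbV ξ' := lt_of_lt_of_le one_pos (one_le_jbV ξ')

lemma jbP_eq (ξ' : Fin k → ℝ) (τ : ℝ) : jbP ξ' (τ * jbV ξ') = jbV ξ' * jb τ := by
  have hS : (0 : ℝ) ≤ ∑ i, ξ' i ^ 2 := Finset.sum_nonneg fun i _ => sq_nonneg _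
  unfold jbP jbV jb
  rw [mul_pow, Real.sq_sqrt (by linarith)]
  rw [← Real.sqrt_mul (by linarith)]
  congr 1
  ring

lemma jb_le_sqrt_two_mul {t r : ℝ} (hr : 1 ≤ r) (ht : |t| ≤ r) : jb t ≤ Real.sqrt 2 * r := by
  have h1 : jb t ≤ Real.sqrt (2 * r ^ 2) := by
    apply Real.sqrt_le_sqrt
    have := sq_abs t
    nlinarith [abs_nonneg t]
  have h2 : Real.sqrt (2 * r ^ 2) = Real.sqrt 2 * r := by
    rw [Real.sqrt_mul (by norm_num), Real.sqrt_sq (by linarith)]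
  linarith [h1, h2.le, h2.ge]

lemma sqrt_two_le_two : Real.sqrt 2 ≤ 2 := by
  nlinarith [Real.sq_sqrt (by norm_num : (0:ℝ) ≤ 2), Real.sqrt_nonneg 2]

/-- Core rescaling inequality: `r^(-e) ≤ 2^e ⟨t⟩^(-e)` when `⟨t⟩ ≤ √2 r`. -/
lemma rescale_core {r t : ℝ} (hr : 1 ≤ r) (ht : jb t ≤ Real.sqrt 2 * r) {e : ℝ} (he : 0 ≤ e) :
    r ^ (-e) ≤ 2 ^ e * jb t ^ (-e) := by
  have hrp : 0 < r := lt_of_lt_of_le one_pos hr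
  have hjp : 0 < jb t := jb_pos t
  have key : jb t ^ e ≤ 2 ^ e * r ^ e := by
    calc jb t ^ e ≤ (Real.sqrt 2 * r) ^ e := Real.rpow_le_rpow hjp.le ht he
      _ = Real.sqrt 2 ^ e * r ^ e := Real.mul_rpow (Real.sqrt_nonneg 2) hrp.le
      _ ≤ 2 ^ e * r ^ e := by
          apply mul_le_mul_of_nonneg_right _ (Real.rpow_nonneg hrp.le e)
          exact Real.rpow_le_rpow (Real.sqrt_nonneg 2) sqrt_two_le_two he
  have hre : 0 < r ^ e := Real.rpow_pos_of_pos hrp e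
  have hje : 0 < jb t ^ e := Real.rpow_pos_of_pos hjp e
  rw [Real.rpow_neg hrp.le, Real.rpow_neg hjp.le]
  rw [inv_le_iff_one_le_mul₀ hre]
  calc (1 : ℝ) = (jb t ^ e) * (jb t ^ e)⁻¹ := (mul_inv_cancel₀ hje.ne').symm
    _ ≤ (2 ^ e * r ^ e) * (jb t ^ e)⁻¹ := by
        exact mul_le_mul_of_nonneg_right key (by positivity)
    _ = 2 ^ e * (jb t ^ e)⁻¹ * r ^ e := by ring

/-- `r^(1-a) ≤ 2^a ⟨t⟩^(1-a)` for `a ≥ 1`. -/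
lemma rescaleA {r t : ℝ} (hr : 1 ≤ r) (ht : jb t ≤ Real.sqrt 2 * r) {a : ℕ} (ha : 1 ≤ a) :
    r ^ ((1 : ℝ) - a) ≤ 2 ^ (a : ℝ) * jb t ^ ((1 : ℝ) - a) := by
  have he : (0 : ℝ) ≤ (a : ℝ) - 1 := by
    have : (1 : ℝ) ≤ (a : ℝ) := by exact_mod_cast ha
    linarith
  have h1 : ((1 : ℝ) - a) = -((a : ℝ) - 1) := by ring
  rw [h1]
  calc r ^ (-((a : ℝ) - 1)) ≤ 2 ^ ((a : ℝ) - 1) * jb t ^ (-((a : ℝ) - 1)) :=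
        rescale_core hr ht he
    _ ≤ 2 ^ (a : ℝ) * jb t ^ (-((a : ℝ) - 1)) := by
        apply mul_le_mul_of_nonneg_right _ (Real.rpow_nonneg (jb_pos t).le _)
        exact Real.rpow_le_rpow_of_exponent_le one_le_two (by linarith)

/-- `⟨t⟩ · r^(-a) ≤ 2^a ⟨t⟩^(1-a)`. -/
lemma rescaleB {r t : ℝ} (hr : 1 ≤ r) (ht : jb t ≤ Real.sqrt 2 * r) (a : ℕ) :
    jb t * r ^ (-(a : ℝ)) ≤ 2 ^ (a : ℝ) * jb t ^ ((1 : ℝ) - a) := by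
  have hjp : 0 < jb t := jb_pos t
  have h1 : r ^ (-(a : ℝ)) ≤ 2 ^ (a : ℝ) * jb t ^ (-(a : ℝ)) :=
    rescale_core hr ht (by positivity)
  calc jb t * r ^ (-(a : ℝ)) ≤ jb t * (2 ^ (a : ℝ) * jb t ^ (-(a : ℝ))) :=
        mul_le_mul_of_nonneg_left h1 hjp.le
    _ = 2 ^ (a : ℝ) * (jb t ^ (1 : ℝ) * jb t ^ (-(a : ℝ))) := by
        rw [Real.rpow_one]; ring
    _ = 2 ^ (a : ℝ) * jb t ^ ((1 : ℝ) - a) := by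
        rw [← Real.rpow_add hjp]
        congr 1

end Brackets
section Step1

lemma d2_iter_phiS {k : ℕ} {ψ : Fn k ℝ} (hψ : ContDiff ℝ (⊤ : ℕ∞) (Fn.unc ψ))
    (ω : ℝ → ℝ) (K : ℝ) (x' ξ' : Fin k → ℝ) (α : ℕ) (t τ : ℝ) :
    (D2)^[α] (PhiS ω K ψ x' ξ') t τ
      = ω (t / jbV ξ') *
          ((Dxin)^[α] (phiOf ψ) x' (t / jbV ξ') ξ' (τ * jbV ξ') * (jbV ξ') ^ α)
        + (1 - ω (t / jbV ξ')) * K * t * lin α τ := by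
  induction α generalizing τ with
  | zero => simp [PhiS, lin]
  | succ α ih =>
    rw [Function.iterate_succ_apply']
    show deriv (fun u => (D2)^[α] (PhiS ω K ψ x' ξ') t u) τ = _
    have hfun : (fun u => (D2)^[α] (PhiS ω K ψ x' ξ') t u)
        = fun u => ω (t / jbV ξ') *
            ((Dxin)^[α] (phiOf ψ) x' (t / jbV ξ') ξ' (u * jbV ξ') * (jbV ξ') ^ α)
          + (1 - ω (t / jbV ξ')) * K * t * lin α u := funext fun u => ih u
    rw [hfun]
    have hφ := contDiff_unc_Dxin_iter (contDiff_unc_phi hψ) α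
    have h1 : HasDerivAt
        (fun u : ℝ => (Dxin)^[α] (phiOf ψ) x' (t / jbV ξ') ξ' (u * jbV ξ'))
        (Dxin ((Dxin)^[α] (phiOf ψ)) x' (t / jbV ξ') ξ' (τ * jbV ξ') * jbV ξ') τ :=
      (hasDerivAt_xin hφ x' (t / jbV ξ') ξ' (τ * jbV ξ')).comp τ (hasDerivAt_mul_const _)
    have h2 : HasDerivAt
        (fun u : ℝ => ω (t / jbV ξ') *
            ((Dxin)^[α] (phiOf ψ) x' (t / jbV ξ') ξ' (u * jbV ξ') * (jbV ξ') ^ α)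
          + (1 - ω (t / jbV ξ')) * K * t * lin α u)
        (ω (t / jbV ξ') *
            (Dxin ((Dxin)^[α] (phiOf ψ)) x' (t / jbV ξ') ξ' (τ * jbV ξ') * jbV ξ' * (jbV ξ') ^ α)
          + (1 - ω (t / jbV ξ')) * K * t * lin (α + 1) τ) τ :=
      ((h1.mul_const _).const_mul _).add ((hasDerivAt_lin α τ).const_mul _)
    rw [h2.deriv, Function.iterate_succ_apply' Dxin α]
    ring

end Step1
lemma dxn_iter_dxin_iter_phi {k : ℕ} (ψ : Fn k ℝ) (α m : ℕ) :
    (Dxn)^[m + 1] ((Dxin)^[α] (phiOf ψ)) = (Dxn)^[m + 1] ((Dxin)^[α] ψ) := by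
  rw [Function.iterate_succ_apply, Function.iterate_succ_apply, dxn_dxin_iter_phi]


/-- (P1) of Theorem 1.2: under (S) and (B), the rescaled phase `*Φ` satisfies the
SG estimates `|∂ₜ^a ∂_τ^α *Φ(t,τ)| ≤ C ⟨t⟩^{1-a} ⟨τ⟩^{1-α}` with `C` independent of
`(x', ξ') ∈ U' × ℝ^{n-1}`. -/
theorem statement0 {n : ℕ} (hn : 2 ≤ n)
    (Ω' : Set (Fin (n - 1) → ℝ)) (hΩ' : IsOpen Ω')
    (U' : Set (Fin (n - 1) → ℝ)) (hU' : IsCompact U') (hUΩ : U' ⊆ Ω')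
    (ψ : Fn (n - 1) ℝ) (hψ : ContDiff ℝ (⊤ : ℕ∞) (Fn.unc ψ))
    (hS : HypS Ω' ψ) (hB : HypB Ω' ψ)
    (ω : ℝ → ℝ) (hω : CutOff ω)
    (K : ℝ) (hK : 0 < K) (a α : ℕ) :
    ∃ C > 0, ∀ x' ∈ U', ∀ (ξ' : Fin (n - 1) → ℝ) (t τ : ℝ),
      |(D1)^[a] ((D2)^[α] (PhiS ω K ψ x' ξ')) t τ| ≤
        C * jb t ^ ((1 : ℝ) - (a : ℝ)) * jb τ ^ ((1 : ℝ) - (α : ℝ)) := by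
  obtain ⟨hωs, hωeven, hωanti, hω1, hω0⟩ := hω
  obtain ⟨M, hM1, hM⟩ := exists_bound_iter_deriv hωs a
  obtain ⟨C1, hC10, hC1⟩ := hS_bound hS α (a + 1)
  obtain ⟨C2, hC20, hC2⟩ := mvt_bound hψ hS hB α
  refine ⟨(2 : ℝ) ^ a * M * (C1 + C2 + K) * 2 ^ a + K + 1, by positivity, ?_⟩
  intro x' hx'U ξ' t τ
  have hx' : x' ∈ Ω' := hUΩ hx'U
  set Cb : ℝ := (2 : ℝ) ^ a * M * (C1 + C2 + K) * 2 ^ a + K + 1 with hCbdef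
  set r := jbV ξ' with hrdef
  have hr : 1 ≤ r := one_le_jbV ξ'
  have hrpos : 0 < r := lt_of_lt_of_le one_pos hr
  set c : ℝ := lin α τ with hcdef
  set Y : ℝ := jb τ ^ ((1 : ℝ) - (α : ℝ)) with hYdef
  have hY0 : 0 < Y := Real.rpow_pos_of_pos (jb_pos τ) _
  have hcY : |c| ≤ Y := abs_lin_le α τ
  set X : ℝ := jb t ^ ((1 : ℝ) - (a : ℝ)) with hXdef
  have hX0 : 0 < X := Real.rpow_pos_of_pos (jb_pos t) _
  set g : ℝ → ℝ := fun s => (Dxin)^[α] (phiOf ψ) x' s ξ' (τ * r) with hgdef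
  have hgsm : ContDiff ℝ (⊤ : ℕ∞) g :=
    contDiff_slice_xn (contDiff_unc_Dxin_iter (contDiff_unc_phi hψ) α) x' ξ' (τ * r)
  set P : ℝ → ℝ := fun s => ω s * (g s * r ^ α) - ω s * (K * c * r * s) with hPdef
  have hP1sm : ContDiff ℝ (⊤ : ℕ∞) (fun s : ℝ => g s * r ^ α) := hgsm.mul contDiff_const
  have hP2sm : ContDiff ℝ (⊤ : ℕ∞) (fun s : ℝ => K * c * r * s) :=
    contDiff_const.mul contDiff_id
  have hPsm : ContDiff ℝ (⊤ : ℕ∞) P := (hωs.mul hP1sm).sub (hωs.mul hP2sm)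
  -- rewrite the function whose derivatives we bound
  rw [d1_iter_eq]
  have hstep1 : (fun u : ℝ => (D2)^[α] (PhiS ω K ψ x' ξ') u τ)
      = fun u => P (u * r⁻¹) + K * c * u := by
    funext u
    rw [d2_iter_phiS hψ ω K x' ξ' α u τ, ← hrdef]
    have h1 : u * r⁻¹ = u / r := (div_eq_mul_inv u r).symm
    have h2 : K * c * r * (u / r) = K * c * u := by
      field_simp
    simp only [hPdef, hgdef, h1, h2, ← hcdef]
    ring
  rw [hstep1]
  -- split off the linear part and rescale
  have hPcomp : ContDiff ℝ (⊤ : ℕ∞) (fun u : ℝ => P (u * r⁻¹)) :=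
    hPsm.comp (contDiff_id.mul contDiff_const)
  have hlinC : ContDiff ℝ (⊤ : ℕ∞) (fun u : ℝ => K * c * u) := contDiff_const.mul contDiff_id
  have hsplit : deriv^[a] (fun u => P (u * r⁻¹) + K * c * u) t
      = (r⁻¹) ^ a * deriv^[a] P (t * r⁻¹) + K * c * lin a t := by
    rw [iter_deriv_add hPcomp hlinC a t, iter_deriv_comp_mul hPsm r⁻¹ a t,
      iter_deriv_linear]
  have hlinb : |K * c * lin a t| ≤ K * Y * X := by
    rw [abs_mul, abs_mul, abs_of_pos hK]
    have h1 : K * |c| ≤ K * Y := mul_le_mul_of_nonneg_left hcY hK.le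
    have h2 : |lin a t| ≤ X := abs_lin_le a t
    exact mul_le_mul h1 h2 (abs_nonneg _) (by positivity)
  have hKCb : K * Y * X ≤ Cb * X * Y := by
    have hK' : K ≤ Cb := by
      rw [hCbdef]
      have h1 : (0 : ℝ) ≤ (2 : ℝ) ^ a * M * (C1 + C2 + K) * 2 ^ a := by positivity
      linarith
    calc K * Y * X ≤ Cb * Y * X := by
          apply mul_le_mul_of_nonneg_right _ hX0.le
          exact mul_le_mul_of_nonneg_right hK' hY0.le
      _ = Cb * X * Y := by ring
  by_cases hcase : |t| ≤ r
  · -- main region ⟨t⟩ ≲ r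
    have hjt : jb t ≤ Real.sqrt 2 * r := jb_le_sqrt_two_mul hr hcase
    set s : ℝ := t * r⁻¹ with hsdef
    have hs1 : |s| ≤ 1 := by
      rw [hsdef, abs_mul, abs_inv, abs_of_pos hrpos]
      rw [← div_eq_mul_inv, div_le_one hrpos]
      exact hcase
    have hs2 : |s| ≤ 2 := le_trans hs1 one_le_two
    have hsr : |s| * r = |t| := by
      rw [hsdef, abs_mul, abs_inv, abs_of_pos hrpos]
      field_simp
    set W : ℝ := if a = 0 then |t| else r with hWdef
    have hW0 : 0 ≤ W := by
      rw [hWdef]; split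
      · exact abs_nonneg t
      · exact hrpos.le
    have htW : |t| ≤ W := by
      rw [hWdef]; split
      · exact le_rfl
      · exact hcase
    -- pointwise bound for jbP
    have hjbP : jbP ξ' (τ * r) ^ ((1 : ℝ) - (α : ℝ)) = r ^ ((1 : ℝ) - (α : ℝ)) * Y := by
      rw [hrdef, jbP_eq ξ' τ, Real.mul_rpow (jbV_pos ξ').le (jb_pos τ).le, hYdef, ← hrdef]
    have hcoll : (r : ℝ) ^ (α : ℕ) * (r ^ ((1 : ℝ) - (α : ℝ)) * Y) = r * Y := by
      rw [← Real.rpow_natCast r α, ← mul_assoc, ← Real.rpow_add hrpos]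
      have h1 : (α : ℝ) + (1 - (α : ℝ)) = 1 := by ring
      rw [h1, Real.rpow_one]
    -- per-term bounds for the product rule sums
    have hfac : ∀ m ≤ a, |deriv^[m] (fun s : ℝ => g s * r ^ α) s| ≤ (C1 + C2) * (W * Y) := by
      intro m hm
      rw [iter_deriv_mul_const hgsm _ m s]
      have hgs : deriv^[m] g s = (Dxn)^[m] ((Dxin)^[α] (phiOf ψ)) x' s ξ' (τ * r) := by
        rw [hgdef]
        exact (dxn_iter_eq _ _ x' s ξ' (τ * r)).symm
      rw [abs_mul, hgs, abs_of_nonneg (pow_nonneg hrpos.le α)]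
      rcases Nat.eq_zero_or_pos m with hm0 | hm1
      · -- m = 0 : use the MVT smallness bound
        subst hm0
        simp only [Function.iterate_zero, id]
        have hb := hC2 x' hx' s hs2 ξ' (τ * r)
        calc |(Dxin)^[α] (phiOf ψ) x' s ξ' (τ * r)| * r ^ α
            ≤ C2 * |s| * jbP ξ' (τ * r) ^ ((1 : ℝ) - (α : ℝ)) * r ^ α := by
              exact mul_le_mul_of_nonneg_right hb (pow_nonneg hrpos.le α)
          _ = C2 * |s| * (r ^ (α : ℕ) * (r ^ ((1 : ℝ) - (α : ℝ)) * Y)) := by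
              rw [hjbP]; ring
          _ = C2 * (|s| * r) * Y := by rw [hcoll]; ring
          _ = C2 * |t| * Y := by rw [hsr]
          _ ≤ C2 * W * Y := by
              apply mul_le_mul_of_nonneg_right _ hY0.le
              exact mul_le_mul_of_nonneg_left htW hC20.le
          _ = C2 * (W * Y) := by ring
          _ ≤ (C1 + C2) * (W * Y) :=
              mul_le_mul_of_nonneg_right (by linarith) (mul_nonneg hW0 hY0.le)
      · -- m ≥ 1 : direct symbol bound
        obtain ⟨m', rfl⟩ : ∃ m', m = m' + 1 := ⟨m - 1, by omega⟩
        rw [dxn_iter_dxin_iter_phi]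
        have hb := hC1 (m' + 1) (by omega) x' hx' s (le_trans hs1 one_le_two) ξ' (τ * r)
        calc |(Dxn)^[m' + 1] ((Dxin)^[α] ψ) x' s ξ' (τ * r)| * r ^ α
            ≤ C1 * jbP ξ' (τ * r) ^ ((1 : ℝ) - (α : ℝ)) * r ^ α := by
              exact mul_le_mul_of_nonneg_right hb (pow_nonneg hrpos.le α)
          _ = C1 * (r ^ (α : ℕ) * (r ^ ((1 : ℝ) - (α : ℝ)) * Y)) := by rw [hjbP]; ring
          _ = C1 * (r * Y) := by rw [hcoll]
          _ ≤ C1 * (W * Y) := by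
              have hWr : r ≤ W := by
                rw [hWdef, if_neg (by omega : ¬ a = 0)]
              exact mul_le_mul_of_nonneg_left
                (mul_le_mul_of_nonneg_right hWr hY0.le) hC10.le
          _ ≤ (C1 + C2) * (W * Y) :=
              mul_le_mul_of_nonneg_right (by linarith) (mul_nonneg hW0 hY0.le)
    have hfac2 : ∀ m ≤ a, |deriv^[m] (fun s : ℝ => K * c * r * s) s| ≤ K * (W * Y) := by
      intro m hm
      rw [iter_deriv_linear (K * c * r) m s, abs_mul, abs_mul, abs_mul, abs_of_pos hK,
        abs_of_pos hrpos]
      rcases Nat.eq_zero_or_pos a with ha0 | ha1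
      · -- a = 0 forces m = 0, lin 0 s = s
        have hm0 : m = 0 := by omega
        subst hm0
        have hlin0 : |lin 0 s| = |s| := rfl
        rw [hlin0]
        calc K * |c| * r * |s| = K * |c| * (|s| * r) := by ring
          _ = K * |c| * |t| := by rw [hsr]
          _ ≤ K * Y * W := by
              apply mul_le_mul _ htW (abs_nonneg t) (by positivity)
              exact mul_le_mul_of_nonneg_left hcY hK.le
          _ = K * (W * Y) := by ring
      · have hWr : r ≤ W := by rw [hWdef, if_neg (by omega : ¬ a = 0)]
        calc K * |c| * r * |lin m s|
            ≤ K * |c| * r * 1 := by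
              apply mul_le_mul_of_nonneg_left (abs_lin_le_one hs1) (by positivity)
          _ = K * |c| * r := by ring
          _ ≤ K * Y * W := by
              apply mul_le_mul _ hWr hrpos.le (by positivity)
              exact mul_le_mul_of_nonneg_left hcY hK.le
          _ = K * (W * Y) := by ring
    -- sum up via the Leibniz rule
    have hPsum : |deriv^[a] P s| ≤ 2 ^ a * M * (C1 + C2 + K) * (W * Y) := by
      have hPd : deriv^[a] P s
          = deriv^[a] (fun s : ℝ => ω s * (g s * r ^ α)) s
            - deriv^[a] (fun s : ℝ => ω s * (K * c * r * s)) s := by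
        rw [hPdef]
        exact iter_deriv_sub (hωs.mul hP1sm) (hωs.mul hP2sm) a s
      have hb1 : |deriv^[a] (fun s : ℝ => ω s * (g s * r ^ α)) s|
          ≤ 2 ^ a * (M * ((C1 + C2) * (W * Y))) := by
        refine le_trans (abs_iter_deriv_mul_le hωs hP1sm a s) ?_
        have hterm : ∀ j ∈ Finset.range (a + 1),
            (a.choose j : ℝ) * |deriv^[j] ω s| * |deriv^[a - j] (fun s : ℝ => g s * r ^ α) s|
              ≤ (a.choose j : ℝ) * (M * ((C1 + C2) * (W * Y))) := by
          intro j hj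
          have hj' : j ≤ a := Nat.lt_succ_iff.mp (Finset.mem_range.mp hj)
          have h1 : |deriv^[j] ω s| ≤ M := hM j hj' s hs1
          have h2 := hfac (a - j) (Nat.sub_le a j)
          rw [mul_assoc]
          apply mul_le_mul_of_nonneg_left _ (Nat.cast_nonneg _)
          exact mul_le_mul h1 h2 (abs_nonneg _) (le_trans zero_le_one hM1)
        refine le_trans (Finset.sum_le_sum hterm) ?_
        rw [← Finset.sum_mul]
        apply mul_le_mul_of_nonneg_right _ (by positivity)
        rw [show ∑ j ∈ Finset.range (a + 1), (a.choose j : ℝ)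
            = ((∑ j ∈ Finset.range (a + 1), a.choose j : ℕ) : ℝ) by push_cast; rfl]
        rw [Nat.sum_range_choose]
        push_cast
        exact le_rfl
      have hb2 : |deriv^[a] (fun s : ℝ => ω s * (K * c * r * s)) s|
          ≤ 2 ^ a * (M * (K * (W * Y))) := by
        refine le_trans (abs_iter_deriv_mul_le hωs hP2sm a s) ?_
        have hterm : ∀ j ∈ Finset.range (a + 1),
            (a.choose j : ℝ) * |deriv^[j] ω s| * |deriv^[a - j] (fun s : ℝ => K * c * r * s) s|
              ≤ (a.choose j : ℝ) * (M * (K * (W * Y))) := by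
          intro j hj
          have hj' : j ≤ a := Nat.lt_succ_iff.mp (Finset.mem_range.mp hj)
          have h1 : |deriv^[j] ω s| ≤ M := hM j hj' s hs1
          have h2 := hfac2 (a - j) (Nat.sub_le a j)
          rw [mul_assoc]
          apply mul_le_mul_of_nonneg_left _ (Nat.cast_nonneg _)
          exact mul_le_mul h1 h2 (abs_nonneg _) (le_trans zero_le_one hM1)
        refine le_trans (Finset.sum_le_sum hterm) ?_
        rw [← Finset.sum_mul]
        apply mul_le_mul_of_nonneg_right _ (by positivity)
        rw [show ∑ j ∈ Finset.range (a + 1), (a.choose j : ℝ)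
            = ((∑ j ∈ Finset.range (a + 1), a.choose j : ℕ) : ℝ) by push_cast; rfl]
        rw [Nat.sum_range_choose]
        push_cast
        exact le_rfl
      calc |deriv^[a] P s| ≤ |deriv^[a] (fun s : ℝ => ω s * (g s * r ^ α)) s|
            + |deriv^[a] (fun s : ℝ => ω s * (K * c * r * s)) s| := by
            rw [hPd]; exact abs_sub _ _
        _ ≤ 2 ^ a * (M * ((C1 + C2) * (W * Y))) + 2 ^ a * (M * (K * (W * Y))) :=
            add_le_add hb1 hb2
        _ = 2 ^ a * M * (C1 + C2 + K) * (W * Y) := by ring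
    -- rescale in t
    have hWX : W * (r⁻¹) ^ a ≤ 2 ^ a * X := by
      have hinv : (r⁻¹ : ℝ) ^ a = r ^ (-(a : ℝ)) := by
        rw [Real.rpow_neg hrpos.le, Real.rpow_natCast, inv_pow]
      rcases Nat.eq_zero_or_pos a with ha0 | ha1
      · subst ha0
        simp only [pow_zero, mul_one, one_mul]
        rw [hWdef, if_pos rfl, hXdef]
        calc |t| ≤ jb t := abs_le_jb t
          _ = jb t ^ ((1 : ℝ) - ((0 : ℕ) : ℝ)) := by
              rw [show (1 : ℝ) - ((0 : ℕ) : ℝ) = 1 by norm_num, Real.rpow_one]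
      · have hWr : W = r := by rw [hWdef, if_neg (by omega : ¬ a = 0)]
        rw [hWr, hinv]
        have h1 : r * r ^ (-(a : ℝ)) = r ^ ((1 : ℝ) - (a : ℝ)) := by
          rw [show r * r ^ (-(a : ℝ)) = r ^ (1 : ℝ) * r ^ (-(a : ℝ)) by rw [Real.rpow_one],
            ← Real.rpow_add hrpos]
          congr 1
        rw [h1]
        have h2 := rescaleA hr hjt ha1
        calc r ^ ((1 : ℝ) - (a : ℝ)) ≤ 2 ^ (a : ℝ) * jb t ^ ((1 : ℝ) - (a : ℝ)) := h2
          _ = 2 ^ a * X := by rw [Real.rpow_natCast, hXdef]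
    -- put everything together
    rw [hsplit]
    have hrinv : (0 : ℝ) ≤ (r⁻¹) ^ a := by positivity
    calc |(r⁻¹) ^ a * deriv^[a] P s + K * c * lin a t|
        ≤ |(r⁻¹) ^ a * deriv^[a] P s| + |K * c * lin a t| := abs_add_le _ _
      _ ≤ (r⁻¹) ^ a * (2 ^ a * M * (C1 + C2 + K) * (W * Y)) + K * Y * X := by
          apply add_le_add _ hlinb
          rw [abs_mul, abs_of_nonneg hrinv]
          exact mul_le_mul_of_nonneg_left hPsum hrinv
      _ = 2 ^ a * M * (C1 + C2 + K) * Y * (W * (r⁻¹) ^ a) + K * Y * X := by ring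
      _ ≤ 2 ^ a * M * (C1 + C2 + K) * Y * (2 ^ a * X) + K * Y * X := by
          apply add_le_add _ le_rfl
          exact mul_le_mul_of_nonneg_left hWX (by positivity)
      _ = (2 ^ a * M * (C1 + C2 + K) * 2 ^ a + K) * X * Y := by ring
      _ ≤ Cb * X * Y := by
          apply mul_le_mul_of_nonneg_right _ hY0.le
          apply mul_le_mul_of_nonneg_right _ hX0.le
          rw [hCbdef]
          linarith
  · -- far region |t| > r : the phase is exactly linear there
    have hSopen : IsOpen {u : ℝ | r < |u|} := isOpen_lt continuous_const continuous_abs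
    have hEq : Set.EqOn (fun u => P (u * r⁻¹) + K * c * u) (fun u => K * c * u)
        {u : ℝ | r < |u|} := by
      intro u hu
      have h1 : (1 : ℝ) ≤ |u * r⁻¹| := by
        rw [abs_mul, abs_inv, abs_of_pos hrpos, ← div_eq_mul_inv, le_div_iff₀ hrpos, one_mul]
        exact (le_of_lt hu)
      have h0 : ω (u * r⁻¹) = 0 := hω0 _ h1
      simp only [hPdef, h0]
      ring
    have ht : t ∈ {u : ℝ | r < |u|} := not_le.mp hcase
    rw [iter_deriv_congr hSopen hEq a ht, iter_deriv_linear]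
    exact le_trans hlinb hKCb
end
end

section
/- Under hypotheses (S) and (B), for every integer α ≥ 0 there exists C > 0 such that for all x' ∈ U', ξ' ∈ ℝ^{n−1} and all (t, τ) ∈ ℝ²: ω(t/⟨ξ'⟩) · ⟨ξ'⟩^{α} · |(∂_{ξ_n}^{α} φ)(x', t/⟨ξ'⟩, ξ', τ⟨ξ'⟩)| ≤ C ⟨t⟩ ⟨τ⟩^{1−α}, the constant C being independent of (x', ξ'). (Estimate (2) in the proof of Theorem 1.2.) -/
noncomputable section

open Real MeasureTheory

namespace Statement5Aux

variable {k : ℕ}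

abbrev P (k : ℕ) := (Fin k → ℝ) × ℝ × (Fin k → ℝ) × ℝ

lemma hasDerivAt_2nd {f : Fn k ℝ} (hf : ContDiff ℝ (⊤ : ℕ∞) (Fn.unc f))
    (x' : Fin k → ℝ) (xn : ℝ) (ξ' : Fin k → ℝ) (ξn : ℝ) :
    HasDerivAt (fun u => f x' u ξ' ξn) (Dxn f x' xn ξ' ξn) xn := by
  have hcurve : Differentiable ℝ (fun u : ℝ => ((x', u, ξ', ξn) : P k)) :=
    (differentiable_const _).prodMk ((differentiable_id).prodMk
      ((differentiable_const _).prodMk (differentiable_const _)))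
  have hd : Differentiable ℝ (fun u => f x' u ξ' ξn) :=
    (hf.differentiable (by simp)).comp hcurve
  exact (hd xn).hasDerivAt

lemma hasDerivAt_4th {f : Fn k ℝ} (hf : ContDiff ℝ (⊤ : ℕ∞) (Fn.unc f))
    (x' : Fin k → ℝ) (xn : ℝ) (ξ' : Fin k → ℝ) (ξn : ℝ) :
    HasDerivAt (fun u => f x' xn ξ' u) (Dxin f x' xn ξ' ξn) ξn := by
  have hcurve : Differentiable ℝ (fun u : ℝ => ((x', xn, ξ', u) : P k)) :=
    (differentiable_const _).prodMk ((differentiable_const _).prodMk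
      ((differentiable_const _).prodMk (differentiable_id)))
  have hd : Differentiable ℝ (fun u => f x' xn ξ' u) :=
    (hf.differentiable (by simp)).comp hcurve
  exact (hd ξn).hasDerivAt

lemma contDiff_Dxin {f : Fn k ℝ} (hf : ContDiff ℝ (⊤ : ℕ∞) (Fn.unc f)) :
    ContDiff ℝ (⊤ : ℕ∞) (Fn.unc (Dxin f)) := by
  have hd := (contDiff_infty_iff_fderiv.mp hf).2
  have he : Fn.unc (Dxin f) = fun p : P k =>
      fderiv ℝ (Fn.unc f) p ((0 : Fin k → ℝ), (0 : ℝ), (0 : Fin k → ℝ), (1 : ℝ)) := by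
    funext p
    have hcurve : HasDerivAt (fun u : ℝ => ((p.1, p.2.1, p.2.2.1, u) : P k))
        (((0 : Fin k → ℝ), (0 : ℝ), (0 : Fin k → ℝ), (1 : ℝ)) : P k) p.2.2.2 :=
      (hasDerivAt_const _ _).prodMk ((hasDerivAt_const _ _).prodMk
        ((hasDerivAt_const _ _).prodMk (hasDerivAt_id' _)))
    have hF := ((hf.differentiable (by simp)) (p.1, p.2.1, p.2.2.1, p.2.2.2)).hasFDerivAt
    have hcomp := hF.comp_hasDerivAt p.2.2.2 hcurve
    exact hcomp.deriv
  rw [he]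
  exact hd.clm_apply contDiff_const

lemma contDiff_DxinIter {f : Fn k ℝ} (hf : ContDiff ℝ (⊤ : ℕ∞) (Fn.unc f)) :
    ∀ m : ℕ, ContDiff ℝ (⊤ : ℕ∞) (Fn.unc ((Dxin)^[m] f))
  | 0 => hf
  | (m + 1) => by
      rw [Function.iterate_succ_apply']
      exact contDiff_Dxin (contDiff_DxinIter hf m)

lemma contDiff_phiOf {ψ : Fn k ℝ} (hψ : ContDiff ℝ (⊤ : ℕ∞) (Fn.unc ψ)) :
    ContDiff ℝ (⊤ : ℕ∞) (Fn.unc (phiOf ψ)) := by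
  have he : Fn.unc (phiOf ψ) =
      fun p : P k => Fn.unc ψ p - Fn.unc ψ (p.1, 0, p.2.2.1, 0) := rfl
  rw [he]
  refine hψ.sub (hψ.comp ?_)
  exact contDiff_fst.prodMk (contDiff_const.prodMk
    ((contDiff_fst.comp (contDiff_snd.comp contDiff_snd)).prodMk contDiff_const))

lemma DxpM_zero (f : Fn k ℝ) : DxpM (fun _ => 0) f = f := by
  show List.foldr _ f (List.finRange k) = f
  induction List.finRange k with
  | nil => rfl
  | cons a l ih => simpa using ih

lemma DxipM_zero (f : Fn k ℝ) : DxipM (fun _ => 0) f = f := by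
  show List.foldr _ f (List.finRange k) = f
  induction List.finRange k with
  | nil => rfl
  | cons a l ih => simpa using ih

lemma DxinIter_zero (x' : Fin k → ℝ) :
    ∀ (m : ℕ) (g : Fn k ℝ), (∀ ξ' s, g x' 0 ξ' s = 0) →
      ∀ ξ' s, (Dxin)^[m] g x' 0 ξ' s = 0 := by
  intro m
  induction m with
  | zero => intro g hg ξ' s; simpa using hg ξ' s
  | succ m ih =>
      intro g hg ξ' s
      rw [Function.iterate_succ_apply]
      refine ih (Dxin g) (fun ξ' s => ?_) ξ' s
      have hfun : (fun t => g x' 0 ξ' t) = fun _ => (0 : ℝ) := funext (hg ξ')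
      show deriv (fun t => g x' 0 ξ' t) s = 0
      rw [hfun]
      simp

lemma Dxin_phiOf (ψ : Fn k ℝ) : Dxin (phiOf ψ) = Dxin ψ := by
  funext x' xn ξ' ξn
  show deriv (fun t => ψ x' xn ξ' t - ψ x' 0 ξ' 0) ξn = deriv (fun t => ψ x' xn ξ' t) ξn
  exact deriv_sub_const _

lemma Dxn_phiOf (ψ : Fn k ℝ) : Dxn (phiOf ψ) = Dxn ψ := by
  funext x' xn ξ' ξn
  show deriv (fun u => ψ x' u ξ' ξn - ψ x' 0 ξ' 0) xn = deriv (fun u => ψ x' u ξ' ξn) xn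
  exact deriv_sub_const _

lemma DxinIter_phiOf (ψ : Fn k ℝ) (m : ℕ) :
    (Dxin)^[m + 1] (phiOf ψ) = (Dxin)^[m + 1] ψ := by
  rw [Function.iterate_succ_apply, Function.iterate_succ_apply, Dxin_phiOf]

lemma Dxn_DxinIter_phiOf (ψ : Fn k ℝ) (m : ℕ) :
    Dxn ((Dxin)^[m] (phiOf ψ)) = Dxn ((Dxin)^[m] ψ) := by
  cases m with
  | zero => simpa using Dxn_phiOf ψ
  | succ m => rw [DxinIter_phiOf]

lemma jbV_pos (v : Fin k → ℝ) : 0 < jbV v :=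
  Real.sqrt_pos.mpr (by positivity)

lemma one_le_jbV (v : Fin k → ℝ) : 1 ≤ jbV v := by
  have h0 : (0 : ℝ) ≤ ∑ i, v i ^ 2 := by positivity
  have h : (1 : ℝ) ≤ 1 + ∑ i, v i ^ 2 := by linarith
  calc (1 : ℝ) = Real.sqrt 1 := Real.sqrt_one.symm
    _ ≤ jbV v := Real.sqrt_le_sqrt h

lemma jb_pos (t : ℝ) : 0 < jb t :=
  Real.sqrt_pos.mpr (by positivity)

lemma abs_le_jb (t : ℝ) : |t| ≤ jb t := by
  calc |t| = Real.sqrt (t ^ 2) := (Real.sqrt_sq_eq_abs t).symm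
    _ ≤ jb t := Real.sqrt_le_sqrt (by nlinarith)

lemma jbP_eq (ξ' : Fin k → ℝ) (τ : ℝ) : jbP ξ' (τ * jbV ξ') = jbV ξ' * jb τ := by
  unfold jbP jbV jb
  rw [← Real.sqrt_mul (by positivity)]
  congr 1
  rw [mul_pow, Real.sq_sqrt (by positivity)]
  ring

lemma omega_abs {ω : ℝ → ℝ} (hω : CutOff ω) (s : ℝ) : ω s = ω |s| := by
  rcases abs_cases s with ⟨h, _⟩ | ⟨h, _⟩
  · rw [h]
  · rw [h, hω.2.1]

lemma omega_nonneg {ω : ℝ → ℝ} (hω : CutOff ω) (s : ℝ) : 0 ≤ ω s := by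
  rw [omega_abs hω]
  by_cases h : 1 ≤ |s|
  · rw [hω.2.2.2.2 |s| (by rwa [abs_abs])]
  · have h1 : |s| ≤ 1 := le_of_lt (not_le.mp h)
    have h2 : ω 1 ≤ ω |s| :=
      hω.2.2.1 (Set.mem_Ici.mpr (abs_nonneg s)) (Set.mem_Ici.mpr zero_le_one) h1
    have h3 : ω 1 = 0 := hω.2.2.2.2 1 (by norm_num)
    linarith

lemma omega_le_one {ω : ℝ → ℝ} (hω : CutOff ω) (s : ℝ) : ω s ≤ 1 := by
  rw [omega_abs hω]
  have h2 : ω |s| ≤ ω 0 :=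
    hω.2.2.1 (Set.mem_Ici.mpr le_rfl) (Set.mem_Ici.mpr (abs_nonneg s)) (abs_nonneg s)
  have h3 : ω 0 = 1 := hω.2.2.2.1 0 (by norm_num)
  linarith

lemma omega_support {ω : ℝ → ℝ} (hω : CutOff ω) {s : ℝ} (h : ω s ≠ 0) : |s| ≤ 1 := by
  by_contra hc
  exact h (hω.2.2.2.2 s (le_of_lt (not_le.mp hc)))

end Statement5Aux

/-- Estimate (2) in the proof of Theorem 1.2: under (S) and (B), for every `α ∈ ℕ`,
`ω(t/⟨ξ'⟩) ⟨ξ'⟩^α |(∂_{ξₙ}^α φ)(x', t/⟨ξ'⟩, ξ', τ⟨ξ'⟩)| ≤ C ⟨t⟩ ⟨τ⟩^{1-α}` with `C`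
independent of `(x', ξ') ∈ U' × ℝ^{n-1}`. -/
theorem statement5 {n : ℕ} (hn : 2 ≤ n)
    (Ω' : Set (Fin (n - 1) → ℝ)) (hΩ' : IsOpen Ω')
    (U' : Set (Fin (n - 1) → ℝ)) (hU' : IsCompact U') (hUΩ : U' ⊆ Ω')
    (ψ : Fn (n - 1) ℝ) (hψ : ContDiff ℝ (⊤ : ℕ∞) (Fn.unc ψ))
    (hS : HypS Ω' ψ) (hB : HypB Ω' ψ)
    (ω : ℝ → ℝ) (hω : CutOff ω) (α : ℕ) :
    ∃ C > 0, ∀ x' ∈ U', ∀ (ξ' : Fin (n - 1) → ℝ) (t τ : ℝ),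
      ω (t / jbV ξ') * jbV ξ' ^ (α : ℝ) *
        |(Dxin)^[α] (phiOf ψ) x' (t / jbV ξ') ξ' (τ * jbV ξ')| ≤
      C * jb t * jb τ ^ ((1 : ℝ) - (α : ℝ)) := by
  classical
  open Statement5Aux in
  obtain ⟨C, hC, hCb⟩ := hS α 1 (fun _ => 0) (fun _ => 0)
  refine ⟨C, hC, ?_⟩
  intro x' hx' ξ' t τ
  have hxΩ : x' ∈ Ω' := hUΩ hx'
  set s : ℝ := t / jbV ξ' with hs
  set ξn : ℝ := τ * jbV ξ' with hξn
  have hjV : 0 < jbV ξ' := Statement5Aux.jbV_pos ξ'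
  have hjτ : 0 < jb τ := Statement5Aux.jb_pos τ
  have hjt : 0 < jb t := Statement5Aux.jb_pos t
  by_cases hω0 : ω s = 0
  · rw [hω0, zero_mul, zero_mul]
    have : (0:ℝ) ≤ C * jb t * jb τ ^ ((1:ℝ) - (α:ℝ)) := by positivity
    exact this
  · have hsle : |s| ≤ 1 := Statement5Aux.omega_support hω hω0
    set G : Fn (n-1) ℝ := (Dxin)^[α] (phiOf ψ) with hG
    have hGsm : ContDiff ℝ (⊤:ℕ∞) (Fn.unc G) :=
      Statement5Aux.contDiff_DxinIter (Statement5Aux.contDiff_phiOf hψ) α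
    -- G vanishes at xn = 0
    have hG0 : G x' 0 ξ' ξn = 0 := by
      cases α with
      | zero =>
          have hd : Differentiable ℝ (fun u => ψ x' 0 ξ' u) := fun u =>
            (Statement5Aux.hasDerivAt_4th hψ x' 0 ξ' u).differentiableAt
          have hz : ∀ u, deriv (fun u => ψ x' 0 ξ' u) u = 0 := fun u => hB x' hxΩ ξ' u
          have hc := is_const_of_deriv_eq_zero hd hz ξn 0
          show ψ x' 0 ξ' ξn - ψ x' 0 ξ' 0 = 0
          rw [hc, sub_self]
      | succ m =>
          rw [hG, Statement5Aux.DxinIter_phiOf, Function.iterate_succ_apply]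
          exact Statement5Aux.DxinIter_zero x' m (Dxin ψ) (fun ξ'' s'' => hB x' hxΩ ξ'' s'') ξ' ξn
    -- derivative bound on the segment
    have hDbound : ∀ u ∈ Set.Icc (-2:ℝ) 2,
        ‖Dxn G x' u ξ' ξn‖ ≤ C * jbP ξ' ξn ^ ((1:ℝ) - (α:ℝ)) := by
      intro u hu
      have hu2 : |u| ≤ 2 := abs_le.mpr ⟨hu.1, hu.2⟩
      have hb := hCb x' hxΩ u hu2 ξ' ξn
      rw [Statement5Aux.DxpM_zero, Statement5Aux.DxipM_zero, Function.iterate_one] at hb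
      have hexp : ((1:ℝ) - ((α:ℝ) + ∑ i : Fin (n-1), (((fun _ => 0) i : ℕ) : ℝ)))
          = (1:ℝ) - (α:ℝ) := by simp
      rw [hexp] at hb
      rw [Real.norm_eq_abs, hG, Statement5Aux.Dxn_DxinIter_phiOf]
      exact hb
    -- mean value inequality
    have hMVT : |G x' s ξ' ξn| ≤ (C * jbP ξ' ξn ^ ((1:ℝ) - (α:ℝ))) * |s| := by
      have hder : ∀ u ∈ Set.Icc (-2:ℝ) 2,
          HasDerivWithinAt (fun u => G x' u ξ' ξn) (Dxn G x' u ξ' ξn) (Set.Icc (-2:ℝ) 2) u :=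
        fun u _ => (Statement5Aux.hasDerivAt_2nd hGsm x' u ξ' ξn).hasDerivWithinAt
      have h0m : (0:ℝ) ∈ Set.Icc (-2:ℝ) 2 := by norm_num
      have hsm : s ∈ Set.Icc (-2:ℝ) 2 := by
        rcases abs_le.mp hsle with ⟨h1, h2⟩
        constructor <;> linarith
      have := Convex.norm_image_sub_le_of_norm_hasDerivWithin_le hder hDbound
        (convex_Icc _ _) h0m hsm
      rw [hG0, sub_zero, sub_zero, Real.norm_eq_abs, Real.norm_eq_abs] at this
      exact this
    -- put everything together
    have hjbPeq : jbP ξ' ξn = jbV ξ' * jb τ := Statement5Aux.jbP_eq ξ' τ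
    have hpow : (0:ℝ) ≤ jbV ξ' ^ (α:ℝ) := Real.rpow_nonneg hjV.le _
    have e1 : jbV ξ' ^ (α:ℝ) * jbV ξ' ^ ((1:ℝ) - (α:ℝ)) = jbV ξ' := by
      rw [← Real.rpow_add hjV]
      norm_num
    have habs : |s| = |t| / jbV ξ' := by
      rw [hs, abs_div, abs_of_pos hjV]
    have hkey : jbV ξ' ^ (α:ℝ) * ((C * jbP ξ' ξn ^ ((1:ℝ) - (α:ℝ))) * |s|)
        = C * |t| * jb τ ^ ((1:ℝ) - (α:ℝ)) := by
      rw [hjbPeq, Real.mul_rpow hjV.le hjτ.le, habs]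
      field_simp
      linear_combination |t| * e1
    calc ω s * jbV ξ' ^ (α:ℝ) * |G x' s ξ' ξn|
        ≤ 1 * jbV ξ' ^ (α:ℝ) * ((C * jbP ξ' ξn ^ ((1:ℝ) - (α:ℝ))) * |s|) := by
          apply mul_le_mul
          · exact mul_le_mul (Statement5Aux.omega_le_one hω s) le_rfl hpow zero_le_one
          · exact hMVT
          · exact abs_nonneg _
          · positivity
      _ = C * |t| * jb τ ^ ((1:ℝ) - (α:ℝ)) := by rw [one_mul, hkey]
      _ ≤ C * jb t * jb τ ^ ((1:ℝ) - (α:ℝ)) := by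
          apply mul_le_mul_of_nonneg_right _ (Real.rpow_nonneg hjτ.le _)
          exact mul_le_mul_of_nonneg_left (Statement5Aux.abs_le_jb t) hC.le
end
end

section
/- Let a ∈ S^m(ℝⁿ × ℝⁿ). Then a ∈ BS^m(ℝ^{n−1}, ℝ^{n−1}; S^m(ℝ)); in particular, for all γ, δ ∈ ℕ and every compact Q ⊆ ℝⁿ there is C > 0 such that |∂_{ξ_n}^γ ∂_{x_n}^δ [ a(x', x_n/⟨ξ'⟩, ξ', ξ_n⟨ξ'⟩) ]| ≤ C ⟨ξ'⟩^{m} ⟨ξ_n⟩^{m−γ} for all (x', x_n) ∈ Q and all (ξ', ξ_n) ∈ ℝⁿ. (Remark 4.3 and estimate (vero).) -/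
noncomputable section

open Real MeasureTheory

/-- The symbol class `S^m(ℝⁿ × ℝⁿ)` (in the splitting `(x', xₙ, ξ', ξₙ)`):
smooth functions all of whose derivatives `∂ₓ^β ∂_ξ^α a` are `O(⟨ξ⟩^{m-|α|})`. -/
def Sm {k : ℕ} (m : ℝ) (a : Fn k ℂ) : Prop :=
  ContDiff ℝ (⊤ : ℕ∞) (Fn.unc a) ∧
  ∀ (p q : ℕ) (α β : Fin k → ℕ), ∃ C > 0,
    ∀ (x' : Fin k → ℝ) (xn : ℝ) (ξ' : Fin k → ℝ) (ξn : ℝ),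
      ‖DxpM β ((Dxn)^[q] (DxipM α ((Dxin)^[p] a))) x' xn ξ' ξn‖ ≤
        C * jbP ξ' ξn ^ (m - ((p : ℝ) + ∑ i, (α i : ℝ)))

/-- The class `BS^μ(ℝ^{n-1}, ℝ^{n-1}; S^l(ℝ))`: a smooth function `b(x', xₙ, ξ', ξₙ)`
belongs to it if for all multi-indices `α, β`, all `γ, δ ∈ ℕ` and every compact `Q ⊆ ℝⁿ`
one has `|∂_{ξₙ}^γ ∂_{xₙ}^δ [(∂_{ξ'}^α ∂_{x'}^β b)(x', xₙ/⟨ξ'⟩, ξ', ξₙ⟨ξ'⟩)]|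
≤ C ⟨ξₙ⟩^{l-γ} ⟨ξ'⟩^{μ-|α|}` on `Q × ℝⁿ`. -/
def BS {k : ℕ} (μ l : ℝ) (b : Fn k ℂ) : Prop :=
  ContDiff ℝ (⊤ : ℕ∞) (Fn.unc b) ∧
  ∀ (α β : Fin k → ℕ) (γ δ : ℕ) (Q : Set ((Fin k → ℝ) × ℝ)), IsCompact Q →
    ∃ C > 0, ∀ (x' : Fin k → ℝ) (xn : ℝ), (x', xn) ∈ Q →
      ∀ (ξ' : Fin k → ℝ) (ξn : ℝ),
        ‖(D2)^[γ] ((D1)^[δ]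
            (fun u v => DxipM α (DxpM β b) x' (u / jbV ξ') ξ' (v * jbV ξ'))) xn ξn‖ ≤
          C * jb ξn ^ (l - (γ : ℝ)) * jbV ξ' ^ (μ - ∑ i, (α i : ℝ))


namespace Statement8Aux

abbrev P (k : ℕ) := (Fin k → ℝ) × ℝ × (Fin k → ℝ) × ℝ

variable {k : ℕ}

/-- Directional derivative operator. -/
def dd (v : P k) (F : P k → ℂ) : P k → ℂ := fun p => fderiv ℝ F p v

lemma one_le_top' : ((⊤ : ℕ∞) : WithTop ℕ∞) ≠ 0 := by simp

lemma dd_contDiff {v : P k} {F : P k → ℂ} (hF : ContDiff ℝ (⊤ : ℕ∞) F) :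
    ContDiff ℝ (⊤ : ℕ∞) (dd v F) :=
  (hF.fderiv_right (by simp)).clm_apply contDiff_const

lemma dd_comm {v w : P k} {F : P k → ℂ} (hF : ContDiff ℝ (⊤ : ℕ∞) F) :
    dd v (dd w F) = dd w (dd v F) := by
  funext p
  have hd : ∀ y, HasFDerivAt F (fderiv ℝ F y) y := fun y =>
    (hF.differentiable one_le_top' y).hasFDerivAt
  have h2 : HasFDerivAt (fderiv ℝ F) (fderiv ℝ (fderiv ℝ F) p) p :=
    ((hF.fderiv_right (by simp)).differentiable one_le_top' p).hasFDerivAt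
  have key := second_derivative_symmetric hd h2 v w
  have A : ∀ u : P k, fderiv ℝ (fun q => fderiv ℝ F q u) p
      = (ContinuousLinearMap.apply ℝ ℂ u).comp (fderiv ℝ (fderiv ℝ F) p) := by
    intro u
    have h3 : HasFDerivAt (fun q => fderiv ℝ F q u)
        ((ContinuousLinearMap.apply ℝ ℂ u).comp (fderiv ℝ (fderiv ℝ F) p)) p :=
      (ContinuousLinearMap.apply ℝ ℂ u).hasFDerivAt.comp p h2
    exact h3.fderiv
  show fderiv ℝ (fun q => fderiv ℝ F q w) p v = fderiv ℝ (fun q => fderiv ℝ F q v) p w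
  rw [A w, A v]
  simpa using key

/-- Iterated directional derivative along a list of directions. -/
def DD (l : List (P k)) (F : P k → ℂ) : P k → ℂ := l.foldr dd F

@[simp] lemma DD_nil (F : P k → ℂ) : DD ([] : List (P k)) F = F := rfl

@[simp] lemma DD_cons (v : P k) (l : List (P k)) (F : P k → ℂ) :
    DD (v :: l) F = dd v (DD l F) := rfl

lemma DD_contDiff {F : P k → ℂ} (hF : ContDiff ℝ (⊤ : ℕ∞) F) (l : List (P k)) :
    ContDiff ℝ (⊤ : ℕ∞) (DD l F) := by
  induction l with
  | nil => exact hF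
  | cons v l ih => exact dd_contDiff ih

lemma dd_iter_contDiff {F : P k → ℂ} (hF : ContDiff ℝ (⊤ : ℕ∞) F) (v : P k) (q : ℕ) :
    ContDiff ℝ (⊤ : ℕ∞) ((dd v)^[q] F) := by
  induction q with
  | zero => exact hF
  | succ q ih => rw [Function.iterate_succ_apply']; exact dd_contDiff ih

lemma DD_append (l₁ l₂ : List (P k)) (F : P k → ℂ) :
    DD (l₁ ++ l₂) F = DD l₁ (DD l₂ F) := by
  induction l₁ with
  | nil => rfl
  | cons v l ih => simp [ih]

lemma DD_replicate (q : ℕ) (v : P k) (F : P k → ℂ) :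
    DD (List.replicate q v) F = (dd v)^[q] F := by
  induction q with
  | zero => rfl
  | succ q ih => rw [List.replicate_succ, DD_cons, ih, Function.iterate_succ_apply']

lemma DD_perm {F : P k → ℂ} (hF : ContDiff ℝ (⊤ : ℕ∞) F) {l₁ l₂ : List (P k)}
    (h : l₁.Perm l₂) : DD l₁ F = DD l₂ F := by
  induction h with
  | nil => rfl
  | cons x _ ih => rw [DD_cons, DD_cons, ih]
  | swap x y l => simp only [DD_cons]; rw [dd_comm (DD_contDiff hF l)]
  | trans _ _ ih₁ ih₂ => rw [ih₁, ih₂]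

lemma perm_ABCD (A B C D : List (P k)) :
    (D ++ (B ++ (C ++ A))).Perm (A ++ (B ++ (C ++ D))) := by
  classical
  rw [List.perm_iff_count]
  intro x
  simp only [List.count_append]
  omega

/-- Coordinate directions. -/
def e1 : P k := (0, 1, 0, 0)
def e2 : P k := (0, 0, 0, 1)
def ex (i : Fin k) : P k := (Pi.single i 1, 0, 0, 0)
def exi (i : Fin k) : P k := (0, 0, Pi.single i 1, 0)

lemma unc_Dxn {f : Fn k ℂ} (hf : ContDiff ℝ (⊤ : ℕ∞) (Fn.unc f)) :
    Fn.unc (Dxn f) = dd e1 (Fn.unc f) := by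
  funext p
  obtain ⟨x', xn, ξ', ξn⟩ := p
  have hL : HasDerivAt (fun t : ℝ => ((x', t, ξ', ξn) : P k)) (e1 : P k) xn :=
    (hasDerivAt_const xn x').prodMk ((hasDerivAt_id xn).prodMk
      ((hasDerivAt_const xn ξ').prodMk (hasDerivAt_const xn ξn)))
  have hF : HasFDerivAt (Fn.unc f) (fderiv ℝ (Fn.unc f) (x', xn, ξ', ξn)) (x', xn, ξ', ξn) :=
    (hf.differentiable one_le_top' _).hasFDerivAt
  exact (hF.comp_hasDerivAt _ hL).deriv

lemma unc_Dxin {f : Fn k ℂ} (hf : ContDiff ℝ (⊤ : ℕ∞) (Fn.unc f)) :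
    Fn.unc (Dxin f) = dd e2 (Fn.unc f) := by
  funext p
  obtain ⟨x', xn, ξ', ξn⟩ := p
  have hL : HasDerivAt (fun t : ℝ => ((x', xn, ξ', t) : P k)) (e2 : P k) ξn :=
    (hasDerivAt_const ξn x').prodMk ((hasDerivAt_const ξn xn).prodMk
      ((hasDerivAt_const ξn ξ').prodMk (hasDerivAt_id ξn)))
  have hF : HasFDerivAt (Fn.unc f) (fderiv ℝ (Fn.unc f) (x', xn, ξ', ξn)) (x', xn, ξ', ξn) :=
    (hf.differentiable one_le_top' _).hasFDerivAt
  exact (hF.comp_hasDerivAt _ hL).deriv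

lemma unc_Dxp (i : Fin k) {f : Fn k ℂ} (hf : ContDiff ℝ (⊤ : ℕ∞) (Fn.unc f)) :
    Fn.unc (Dxp i f) = dd (ex i) (Fn.unc f) := by
  funext p
  obtain ⟨x', xn, ξ', ξn⟩ := p
  have hL : HasDerivAt (fun t : ℝ => ((Function.update x' i t, xn, ξ', ξn) : P k))
      (ex i : P k) (x' i) :=
    (hasDerivAt_update x' i (x' i)).prodMk ((hasDerivAt_const _ xn).prodMk
      ((hasDerivAt_const _ ξ').prodMk (hasDerivAt_const _ ξn)))
  have hF : HasFDerivAt (Fn.unc f) (fderiv ℝ (Fn.unc f) (x', xn, ξ', ξn)) (x', xn, ξ', ξn) :=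
    (hf.differentiable one_le_top' _).hasFDerivAt
  exact (hF.comp_hasDerivAt_of_eq (x' i) hL (by rw [Function.update_eq_self])).deriv

lemma unc_Dxip (i : Fin k) {f : Fn k ℂ} (hf : ContDiff ℝ (⊤ : ℕ∞) (Fn.unc f)) :
    Fn.unc (Dxip i f) = dd (exi i) (Fn.unc f) := by
  funext p
  obtain ⟨x', xn, ξ', ξn⟩ := p
  have hL : HasDerivAt (fun t : ℝ => ((x', xn, Function.update ξ' i t, ξn) : P k))
      (exi i : P k) (ξ' i) :=
    (hasDerivAt_const _ x').prodMk ((hasDerivAt_const _ xn).prodMk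
      ((hasDerivAt_update ξ' i (ξ' i)).prodMk (hasDerivAt_const _ ξn)))
  have hF : HasFDerivAt (Fn.unc f) (fderiv ℝ (Fn.unc f) (x', xn, ξ', ξn)) (x', xn, ξ', ξn) :=
    (hf.differentiable one_le_top' _).hasFDerivAt
  exact (hF.comp_hasDerivAt_of_eq (ξ' i) hL (by rw [Function.update_eq_self])).deriv

lemma unc_iter {op : Fn k ℂ → Fn k ℂ} {v : P k}
    (hop : ∀ g : Fn k ℂ, ContDiff ℝ (⊤ : ℕ∞) (Fn.unc g) → Fn.unc (op g) = dd v (Fn.unc g))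
    (q : ℕ) :
    ∀ f : Fn k ℂ, ContDiff ℝ (⊤ : ℕ∞) (Fn.unc f) →
      Fn.unc (op^[q] f) = (dd v)^[q] (Fn.unc f) := by
  induction q with
  | zero => intro f _; rfl
  | succ q ih =>
    intro f hf
    rw [Function.iterate_succ_apply, Function.iterate_succ_apply, ← hop f hf]
    exact ih (op f) (by rw [hop f hf]; exact dd_contDiff hf)

/-- The list of directions corresponding to a multi-index over a list of coordinates. -/
def dirsOf (e : Fin k → P k) (β : Fin k → ℕ) : List (Fin k) → List (P k)
  | [] => []
  | i :: l => List.replicate (β i) (e i) ++ dirsOf e β l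

lemma unc_foldr {op : Fin k → Fn k ℂ → Fn k ℂ} {e : Fin k → P k}
    (hop : ∀ i (g : Fn k ℂ), ContDiff ℝ (⊤ : ℕ∞) (Fn.unc g) →
      Fn.unc (op i g) = dd (e i) (Fn.unc g))
    (β : Fin k → ℕ) :
    ∀ (l : List (Fin k)) (f : Fn k ℂ), ContDiff ℝ (⊤ : ℕ∞) (Fn.unc f) →
      Fn.unc (l.foldr (fun i g => (op i)^[β i] g) f) = DD (dirsOf e β l) (Fn.unc f) := by
  intro l
  induction l with
  | nil => intro f _; rfl
  | cons i l ih =>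
    intro f hf
    have h1 := ih f hf
    have hg : ContDiff ℝ (⊤ : ℕ∞) (Fn.unc (l.foldr (fun i g => (op i)^[β i] g) f)) := by
      rw [h1]; exact DD_contDiff hf _
    rw [List.foldr_cons, unc_iter (hop i) (β i) _ hg, h1,
      show dirsOf e β (i :: l) = List.replicate (β i) (e i) ++ dirsOf e β l from rfl,
      DD_append, DD_replicate]

lemma unc_DxpM {f : Fn k ℂ} (hf : ContDiff ℝ (⊤ : ℕ∞) (Fn.unc f)) (β : Fin k → ℕ) :
    Fn.unc (DxpM β f) = DD (dirsOf ex β (List.finRange k)) (Fn.unc f) :=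
  unc_foldr (fun i g hg => unc_Dxp i hg) β (List.finRange k) f hf

lemma unc_DxipM {f : Fn k ℂ} (hf : ContDiff ℝ (⊤ : ℕ∞) (Fn.unc f)) (α : Fin k → ℕ) :
    Fn.unc (DxipM α f) = DD (dirsOf exi α (List.finRange k)) (Fn.unc f) :=
  unc_foldr (fun i g hg => unc_Dxip i hg) α (List.finRange k) f hf

lemma unc_DxnIter {f : Fn k ℂ} (hf : ContDiff ℝ (⊤ : ℕ∞) (Fn.unc f)) (q : ℕ) :
    Fn.unc ((Dxn)^[q] f) = DD (List.replicate q e1) (Fn.unc f) := by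
  rw [DD_replicate]; exact unc_iter (fun g hg => unc_Dxn hg) q f hf

lemma unc_DxinIter {f : Fn k ℂ} (hf : ContDiff ℝ (⊤ : ℕ∞) (Fn.unc f)) (q : ℕ) :
    Fn.unc ((Dxin)^[q] f) = DD (List.replicate q e2) (Fn.unc f) := by
  rw [DD_replicate]; exact unc_iter (fun g hg => unc_Dxin hg) q f hf

lemma unc_full {a : Fn k ℂ} (hf : ContDiff ℝ (⊤ : ℕ∞) (Fn.unc a))
    (α β : Fin k → ℕ) (γ δ : ℕ) :
    Fn.unc (DxpM β ((Dxn)^[δ] (DxipM α ((Dxin)^[γ] a))))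
      = DD (dirsOf ex β (List.finRange k) ++ (List.replicate δ e1 ++
          (dirsOf exi α (List.finRange k) ++ List.replicate γ e2))) (Fn.unc a) := by
  have h1 := unc_DxinIter hf γ
  have hs1 : ContDiff ℝ (⊤ : ℕ∞) (Fn.unc ((Dxin)^[γ] a)) := by
    rw [h1]; exact DD_contDiff hf _
  have h2 := unc_DxipM hs1 α
  have hs2 : ContDiff ℝ (⊤ : ℕ∞) (Fn.unc (DxipM α ((Dxin)^[γ] a))) := by
    rw [h2]; exact DD_contDiff hs1 _
  have h3 := unc_DxnIter hs2 δ
  have hs3 : ContDiff ℝ (⊤ : ℕ∞) (Fn.unc ((Dxn)^[δ] (DxipM α ((Dxin)^[γ] a)))) := by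
    rw [h3]; exact DD_contDiff hs2 _
  have h4 := unc_DxpM hs3 β
  rw [h4, h3, h2, h1, DD_append, DD_append, DD_append]

lemma unc_ab {a : Fn k ℂ} (hf : ContDiff ℝ (⊤ : ℕ∞) (Fn.unc a)) (α β : Fin k → ℕ) :
    Fn.unc (DxipM α (DxpM β a))
      = DD (dirsOf exi α (List.finRange k) ++ dirsOf ex β (List.finRange k)) (Fn.unc a) := by
  have h1 := unc_DxpM hf β
  have hs1 : ContDiff ℝ (⊤ : ℕ∞) (Fn.unc (DxpM β a)) := by
    rw [h1]; exact DD_contDiff hf _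
  rw [unc_DxipM hs1 α, h1, DD_append]

lemma D1_scaled_pt {G : P k → ℂ} (hG : ContDiff ℝ (⊤ : ℕ∞) G)
    (x' ξ' : Fin k → ℝ) (c r u v : ℝ) :
    deriv (fun s => r • G ((x', s / c, ξ', v * c) : P k)) u
      = (r * c⁻¹) • dd e1 G ((x', u / c, ξ', v * c) : P k) := by
  have hdiv : HasDerivAt (fun s : ℝ => s / c) c⁻¹ u := by
    simpa [one_div] using (hasDerivAt_id u).div_const c
  have hL : HasDerivAt (fun s : ℝ => ((x', s / c, ξ', v * c) : P k))
      (((0 : Fin k → ℝ), c⁻¹, (0 : Fin k → ℝ), (0 : ℝ)) : P k) u :=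
    (hasDerivAt_const u x').prodMk (hdiv.prodMk
      ((hasDerivAt_const u ξ').prodMk (hasDerivAt_const u (v * c))))
  have hF : HasFDerivAt G (fderiv ℝ G ((x', u / c, ξ', v * c) : P k))
      ((x', u / c, ξ', v * c) : P k) := (hG.differentiable one_le_top' _).hasFDerivAt
  have hcomp : HasDerivAt (fun s : ℝ => G ((x', s / c, ξ', v * c) : P k))
      (fderiv ℝ G ((x', u / c, ξ', v * c) : P k)
        (((0 : Fin k → ℝ), c⁻¹, (0 : Fin k → ℝ), (0 : ℝ)) : P k)) u :=
    hF.comp_hasDerivAt _ hL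
  have h : deriv (fun s => r • G ((x', s / c, ξ', v * c) : P k)) u = _ :=
    (hcomp.const_smul r).deriv
  rw [h]
  have he : (((0 : Fin k → ℝ), c⁻¹, (0 : Fin k → ℝ), (0 : ℝ)) : P k) = c⁻¹ • (e1 : P k) := by
    simp [e1, Prod.smul_mk]
  rw [he, (fderiv ℝ G _).map_smul, smul_smul]
  rfl

lemma D2_scaled_pt {G : P k → ℂ} (hG : ContDiff ℝ (⊤ : ℕ∞) G)
    (x' ξ' : Fin k → ℝ) (c r u v : ℝ) :
    deriv (fun t => r • G ((x', u / c, ξ', t * c) : P k)) v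
      = (r * c) • dd e2 G ((x', u / c, ξ', v * c) : P k) := by
  have hmul : HasDerivAt (fun t : ℝ => t * c) c v := by
    simpa using (hasDerivAt_id v).mul_const c
  have hL : HasDerivAt (fun t : ℝ => ((x', u / c, ξ', t * c) : P k))
      (((0 : Fin k → ℝ), (0 : ℝ), (0 : Fin k → ℝ), c) : P k) v :=
    (hasDerivAt_const v x').prodMk ((hasDerivAt_const v (u / c)).prodMk
      ((hasDerivAt_const v ξ').prodMk hmul))
  have hF : HasFDerivAt G (fderiv ℝ G ((x', u / c, ξ', v * c) : P k))
      ((x', u / c, ξ', v * c) : P k) := (hG.differentiable one_le_top' _).hasFDerivAt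
  have hcomp : HasDerivAt (fun t : ℝ => G ((x', u / c, ξ', t * c) : P k))
      (fderiv ℝ G ((x', u / c, ξ', v * c) : P k)
        (((0 : Fin k → ℝ), (0 : ℝ), (0 : Fin k → ℝ), c) : P k)) v :=
    hF.comp_hasDerivAt _ hL
  have h : deriv (fun t => r • G ((x', u / c, ξ', t * c) : P k)) v = _ :=
    (hcomp.const_smul r).deriv
  rw [h]
  have he : (((0 : Fin k → ℝ), (0 : ℝ), (0 : Fin k → ℝ), c) : P k) = c • (e2 : P k) := by
    simp [e2, Prod.smul_mk]
  rw [he, (fderiv ℝ G _).map_smul, smul_smul]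
  rfl

lemma D1_scaled_iter {G : P k → ℂ} (hG : ContDiff ℝ (⊤ : ℕ∞) G)
    (x' ξ' : Fin k → ℝ) (c r : ℝ) (δ : ℕ) :
    (D1)^[δ] (fun u v : ℝ => r • G ((x', u / c, ξ', v * c) : P k))
      = fun u v : ℝ => (r * c⁻¹ ^ δ) • ((dd e1)^[δ] G) ((x', u / c, ξ', v * c) : P k) := by
  induction δ with
  | zero => simp
  | succ δ ih =>
    rw [Function.iterate_succ_apply', ih]
    funext u v
    have hH : ContDiff ℝ (⊤ : ℕ∞) ((dd e1)^[δ] G) := dd_iter_contDiff hG e1 δ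
    show deriv (fun s => (r * c⁻¹ ^ δ) • ((dd e1)^[δ] G) ((x', s / c, ξ', v * c) : P k)) u = _
    rw [D1_scaled_pt hH, ← Function.iterate_succ_apply' (dd e1)]
    congr 1
    ring

lemma D2_scaled_iter {G : P k → ℂ} (hG : ContDiff ℝ (⊤ : ℕ∞) G)
    (x' ξ' : Fin k → ℝ) (c r : ℝ) (γ : ℕ) :
    (D2)^[γ] (fun u v : ℝ => r • G ((x', u / c, ξ', v * c) : P k))
      = fun u v : ℝ => (r * c ^ γ) • ((dd e2)^[γ] G) ((x', u / c, ξ', v * c) : P k) := by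
  induction γ with
  | zero => simp
  | succ γ ih =>
    rw [Function.iterate_succ_apply', ih]
    funext u v
    have hH : ContDiff ℝ (⊤ : ℕ∞) ((dd e2)^[γ] G) := dd_iter_contDiff hG e2 γ
    show deriv (fun t => (r * c ^ γ) • ((dd e2)^[γ] G) ((x', u / c, ξ', t * c) : P k)) v = _
    rw [D2_scaled_pt hH, ← Function.iterate_succ_apply' (dd e2)]
    congr 1
    ring

lemma one_le_jb (t : ℝ) : 1 ≤ jb t := by
  rw [jb]
  calc (1:ℝ) = Real.sqrt 1 := Real.sqrt_one.symm
    _ ≤ Real.sqrt (1 + t ^ 2) := Real.sqrt_le_sqrt (by nlinarith)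

lemma one_le_jbV (v : Fin k → ℝ) : 1 ≤ jbV v := by
  rw [jbV]
  have h : 0 ≤ ∑ i, v i ^ 2 := Finset.sum_nonneg fun i _ => sq_nonneg _
  calc (1:ℝ) = Real.sqrt 1 := Real.sqrt_one.symm
    _ ≤ Real.sqrt (1 + ∑ i, v i ^ 2) := Real.sqrt_le_sqrt (by linarith)

lemma jbP_scale (v : Fin k → ℝ) (t : ℝ) : jbP v (t * jbV v) = jbV v * jb t := by
  have h0 : (0:ℝ) ≤ 1 + ∑ i, v i ^ 2 := by
    have : 0 ≤ ∑ i, v i ^ 2 := Finset.sum_nonneg fun i _ => sq_nonneg _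
    linarith
  unfold jbP jb jbV
  rw [← Real.sqrt_mul h0 (1 + t ^ 2)]
  congr 1
  have hs : Real.sqrt (1 + ∑ i, v i ^ 2) ^ 2 = 1 + ∑ i, v i ^ 2 := Real.sq_sqrt h0
  rw [mul_pow, hs]
  ring

lemma main_est {m : ℝ} {a : Fn k ℂ} (ha : Sm m a) (α β : Fin k → ℕ) (γ δ : ℕ) :
    ∃ C > 0, ∀ (x' : Fin k → ℝ) (xn : ℝ) (ξ' : Fin k → ℝ) (ξn : ℝ),
      ‖(D2)^[γ] ((D1)^[δ]
          (fun u v => DxipM α (DxpM β a) x' (u / jbV ξ') ξ' (v * jbV ξ'))) xn ξn‖ ≤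
        C * jb ξn ^ (m - (γ : ℝ)) * jbV ξ' ^ (m - ∑ i, (α i : ℝ)) := by
  obtain ⟨C, hC, hbound⟩ := ha.2 γ δ α β
  refine ⟨C, hC, ?_⟩
  intro x' xn ξ' ξn
  set c := jbV ξ' with hcdef
  have hc1 : (1:ℝ) ≤ c := one_le_jbV ξ'
  have hc0 : (0:ℝ) < c := lt_of_lt_of_le one_pos hc1
  have hJ1 : (1:ℝ) ≤ jb ξn := one_le_jb ξn
  have hJ0 : (0:ℝ) < jb ξn := lt_of_lt_of_le one_pos hJ1
  set G := Fn.unc (DxipM α (DxpM β a)) with hGdef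
  have hb : G = DD (dirsOf exi α (List.finRange k) ++ dirsOf ex β (List.finRange k))
      (Fn.unc a) := unc_ab ha.1 α β
  have hGsm : ContDiff ℝ (⊤ : ℕ∞) G := by rw [hb]; exact DD_contDiff ha.1 _
  have hfun : (fun u v => DxipM α (DxpM β a) x' (u / c) ξ' (v * c))
      = fun u v : ℝ => (1 : ℝ) • G ((x', u / c, ξ', v * c) : P k) := by
    funext u v; simp [hGdef, Fn.unc]
  rw [hfun, D1_scaled_iter hGsm, D2_scaled_iter (dd_iter_contDiff hGsm e1 δ)]
  have hiter : (dd e2)^[γ] ((dd e1)^[δ] G)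
      = DD (List.replicate γ e2 ++ (List.replicate δ e1 ++
          (dirsOf exi α (List.finRange k) ++ dirsOf ex β (List.finRange k)))) (Fn.unc a) := by
    rw [hb]; simp only [DD_append, DD_replicate]
  have hperm := DD_perm (F := Fn.unc a) ha.1
    (perm_ABCD (dirsOf ex β (List.finRange k)) (List.replicate δ e1)
      (dirsOf exi α (List.finRange k)) (List.replicate γ e2))
  have hsm2 := unc_full ha.1 α β γ δ
  have hkey : (dd e2)^[γ] ((dd e1)^[δ] G)
      = Fn.unc (DxpM β ((Dxn)^[δ] (DxipM α ((Dxin)^[γ] a)))) := by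
    rw [hiter, hsm2, hperm]
  have hbd := hbound x' (xn / c) ξ' (ξn * c)
  have hnorm : ‖((1 : ℝ) * c⁻¹ ^ δ * c ^ γ) •
      ((dd e2)^[γ] ((dd e1)^[δ] G)) ((x', xn / c, ξ', ξn * c) : P k)‖
      = (c⁻¹ ^ δ * c ^ γ) *
        ‖((dd e2)^[γ] ((dd e1)^[δ] G)) ((x', xn / c, ξ', ξn * c) : P k)‖ := by
    rw [norm_smul, Real.norm_eq_abs, one_mul, abs_of_nonneg (by positivity)]
  show ‖((1 : ℝ) * c⁻¹ ^ δ * c ^ γ) •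
      ((dd e2)^[γ] ((dd e1)^[δ] G)) ((x', xn / c, ξ', ξn * c) : P k)‖ ≤ _
  rw [hnorm]
  have hval : ‖((dd e2)^[γ] ((dd e1)^[δ] G)) ((x', xn / c, ξ', ξn * c) : P k)‖
      ≤ C * jbP ξ' (ξn * c) ^ (m - ((γ : ℝ) + ∑ i, (α i : ℝ))) := by
    rw [hkey]; exact hbd
  have hS : (0:ℝ) ≤ ∑ i, (α i : ℝ) := Finset.sum_nonneg fun i _ => Nat.cast_nonneg _
  set S := ∑ i, (α i : ℝ) with hSdef
  have hscale : jbP ξ' (ξn * c) = c * jb ξn := jbP_scale ξ' ξn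
  calc (c⁻¹ ^ δ * c ^ γ) * ‖((dd e2)^[γ] ((dd e1)^[δ] G)) ((x', xn / c, ξ', ξn * c) : P k)‖
      ≤ (c⁻¹ ^ δ * c ^ γ) * (C * (c * jb ξn) ^ (m - ((γ : ℝ) + S))) := by
        rw [← hscale]
        exact mul_le_mul_of_nonneg_left hval (by positivity)
    _ = C * (c ^ (m - (δ : ℝ) - S) * jb ξn ^ (m - (γ : ℝ) - S)) := by
        rw [Real.mul_rpow hc0.le hJ0.le]
        rw [show (c⁻¹ : ℝ) ^ δ = c ^ (-(δ : ℝ)) by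
          rw [Real.rpow_neg hc0.le, Real.rpow_natCast, inv_pow]]
        rw [show (c : ℝ) ^ γ = c ^ ((γ : ℝ)) from (Real.rpow_natCast c γ).symm]
        rw [show m - ((γ : ℝ) + S) = m - (γ : ℝ) - S by ring]
        rw [show m - (δ : ℝ) - S = -(δ : ℝ) + ((γ : ℝ) + (m - (γ : ℝ) - S)) by ring]
        rw [Real.rpow_add hc0, Real.rpow_add hc0]
        ring
    _ ≤ C * (c ^ (m - S) * jb ξn ^ (m - (γ : ℝ))) := by
        have h1 : c ^ (m - (δ : ℝ) - S) ≤ c ^ (m - S) :=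
          Real.rpow_le_rpow_of_exponent_le hc1 (by
            have : (0:ℝ) ≤ (δ : ℝ) := Nat.cast_nonneg _
            linarith)
        have h2 : jb ξn ^ (m - (γ : ℝ) - S) ≤ jb ξn ^ (m - (γ : ℝ)) :=
          Real.rpow_le_rpow_of_exponent_le hJ1 (by linarith)
        have hp1 : (0:ℝ) ≤ c ^ (m - (δ : ℝ) - S) := (Real.rpow_pos_of_pos hc0 _).le
        have hp2 : (0:ℝ) ≤ jb ξn ^ (m - (γ : ℝ) - S) := (Real.rpow_pos_of_pos hJ0 _).le
        have hp3 : (0:ℝ) ≤ c ^ (m - S) := (Real.rpow_pos_of_pos hc0 _).le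
        exact mul_le_mul_of_nonneg_left
          (mul_le_mul h1 h2 hp2 hp3) hC.le
    _ = C * jb ξn ^ (m - (γ : ℝ)) * c ^ (m - S) := by ring

lemma DxpM_zero (f : Fn k ℂ) : DxpM (0 : Fin k → ℕ) f = f := by
  show (List.finRange k).foldr (fun i g => (Dxp i)^[(0 : Fin k → ℕ) i] g) f = f
  induction List.finRange k with
  | nil => rfl
  | cons i l ih =>
    simp only [List.foldr_cons, Pi.zero_apply, Function.iterate_zero, id_eq] at ih ⊢
    exact ih

lemma DxipM_zero (f : Fn k ℂ) : DxipM (0 : Fin k → ℕ) f = f := by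
  show (List.finRange k).foldr (fun i g => (Dxip i)^[(0 : Fin k → ℕ) i] g) f = f
  induction List.finRange k with
  | nil => rfl
  | cons i l ih =>
    simp only [List.foldr_cons, Pi.zero_apply, Function.iterate_zero, id_eq] at ih ⊢
    exact ih

end Statement8Aux

/-- Remark 4.3 and estimate (vero): every `a ∈ S^m(ℝⁿ × ℝⁿ)` belongs to
`BS^m(ℝ^{n-1}, ℝ^{n-1}; S^m(ℝ))`; in particular
`|∂_{ξₙ}^γ ∂_{xₙ}^δ [a(x', xₙ/⟨ξ'⟩, ξ', ξₙ⟨ξ'⟩)]| ≤ C ⟨ξ'⟩^m ⟨ξₙ⟩^{m-γ}`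
on `Q × ℝⁿ` for every compact `Q`. -/
theorem statement8 {n : ℕ} (hn : 2 ≤ n) (m : ℝ) (a : Fn (n - 1) ℂ) (ha : Sm m a) :
    BS m m a ∧
    ∀ (γ δ : ℕ) (Q : Set ((Fin (n - 1) → ℝ) × ℝ)), IsCompact Q →
      ∃ C > 0, ∀ (x' : Fin (n - 1) → ℝ) (xn : ℝ), (x', xn) ∈ Q →
        ∀ (ξ' : Fin (n - 1) → ℝ) (ξn : ℝ),
          ‖(D2)^[γ] ((D1)^[δ]
              (fun u v => a x' (u / jbV ξ') ξ' (v * jbV ξ'))) xn ξn‖ ≤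
            C * jbV ξ' ^ m * jb ξn ^ (m - (γ : ℝ)) := by
  constructor
  · refine ⟨ha.1, fun α β γ δ Q _ => ?_⟩
    obtain ⟨C, hC, h⟩ := Statement8Aux.main_est ha α β γ δ
    exact ⟨C, hC, fun x' xn _ ξ' ξn => h x' xn ξ' ξn⟩
  · intro γ δ Q _
    obtain ⟨C, hC, h⟩ := Statement8Aux.main_est ha (0 : Fin (n-1) → ℕ) (0 : Fin (n-1) → ℕ) γ δ
    refine ⟨C, hC, fun x' xn _ ξ' ξn => ?_⟩
    have hh := h x' xn ξ' ξn
    rw [Statement8Aux.DxpM_zero, Statement8Aux.DxipM_zero] at hh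
    simp only [Pi.zero_apply, Nat.cast_zero, Finset.sum_const_zero, sub_zero] at hh
    rw [mul_right_comm]
    exact hh
end
end
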